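/- arXiv:1610.04601 — 7 statements merged into one kernel-verified Lean document; each statement's English description precedes it below -/
import Mathlib

section
/- Let 1 ≤ N < L be integers, let 𝐳 be a nonzero complex number, and let w_1, …, w_N be complex numbers (not necessarily distinct) satisfying w_i^N (w_i+1)^{L−N} = 𝐳^L for every i (in particular each w_i ∉ {0, −1}). Then ∑_{(y_1,…,y_N) ∈ 𝒴_N(L)} det[w_i^j (w_i+1)^{y_j − j}]_{i,j=1}^N = det[w_i^{j−1} (w_i+1)^{−N+1}]_{i,j=1}^N − (−1)^{N−1} 𝐳^{−L} det[w_i^{j} (w_i+1)^{−N}]_{i,j=1}^N. -/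
/-- The set `𝒴_N(L)` of integer vectors `(y_1, …, y_N)` with
`−L+1 ≤ y_1 < y_2 < ⋯ < y_N ≤ 0`. -/
noncomputable def initialConfigs (N L : ℕ) : Finset (Fin N → ℤ) :=
  (Fintype.piFinset fun _ => Finset.Icc (-(L : ℤ) + 1) 0).filter
    fun y => ∀ i j : Fin N, i < j → y i < y j

namespace TWProof

open Finset Matrix Function

noncomputable def vv {N : ℕ} (w : Fin N → ℂ) : Fin N → ℂ := fun i => w i * (w i + 1)⁻¹

noncomputable def gmat {N : ℕ} (L : ℕ) (w : Fin N → ℂ) : Matrix (Fin N) (Fin N) ℂ :=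
  Matrix.of fun i j => if (j : ℕ) = 0 then 1 - (w i + 1) ^ (-(L : ℤ)) else vv w i ^ (j : ℕ)

noncomputable def Emat {N : ℕ} (L m : ℕ) (w : Fin N → ℂ) (y : Fin N → ℤ) :
    Matrix (Fin N) (Fin N) ℂ :=
  Matrix.of fun i j =>
    if (j : ℕ) < m then vv w i ^ ((j : ℕ) + 1) * (w i + 1) ^ (y j) else gmat L w i j

noncomputable def configs (N L m : ℕ) : Finset (Fin N → ℤ) :=
  (Fintype.piFinset fun j : Fin N =>
      if (j : ℕ) < m then Finset.Icc (-(L : ℤ) + 1) 0 else {0}).filter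
    fun y => ∀ i j : Fin N, (j : ℕ) < m → i < j → y i < y j

lemma mem_configs {N L m : ℕ} {y : Fin N → ℤ} :
    y ∈ configs N L m ↔
      (∀ j : Fin N, (j : ℕ) < m → (-(L : ℤ) + 1 ≤ y j ∧ y j ≤ 0)) ∧
      (∀ j : Fin N, m ≤ (j : ℕ) → y j = 0) ∧
      (∀ i j : Fin N, (j : ℕ) < m → i < j → y i < y j) := by
  unfold configs
  rw [Finset.mem_filter, Fintype.mem_piFinset]
  constructor
  · rintro ⟨h1, h2⟩
    refine ⟨fun j hj => ?_, fun j hj => ?_, h2⟩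
    · have := h1 j; rw [if_pos hj] at this; simpa [Finset.mem_Icc] using this
    · have := h1 j; rw [if_neg (by omega)] at this; simpa using this
  · rintro ⟨h1, h2, h3⟩
    refine ⟨fun j => ?_, h3⟩
    by_cases hj : (j : ℕ) < m
    · rw [if_pos hj]; simpa [Finset.mem_Icc] using h1 j hj
    · rw [if_neg hj]; simp [h2 j (by omega)]

lemma geom_Ioc_nat (x : ℂ) (hx : x ≠ 0) (hx1 : x ≠ 1) :
    ∀ n : ℕ, ∑ t ∈ Finset.Ioc (-(n : ℤ)) 0, x ^ t = (x - x ^ (-(n : ℤ) + 1)) / (x - 1) := by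
  intro n
  induction n with
  | zero => simp
  | succ n ih =>
    have hins : Finset.Ioc (-((n + 1 : ℕ) : ℤ)) 0 = insert (-(n : ℤ)) (Finset.Ioc (-(n : ℤ)) 0) := by
      ext t
      simp only [Finset.mem_Ioc, Finset.mem_insert]
      omega
    have hnot : (-(n : ℤ)) ∉ Finset.Ioc (-(n : ℤ)) 0 := by simp
    rw [hins, Finset.sum_insert hnot, ih]
    have e1 : x ^ (-(n : ℤ) + 1) = x ^ (-(n : ℤ)) * x := zpow_add_one₀ hx _
    have e2 : (-((n + 1 : ℕ) : ℤ) + 1) = -(n : ℤ) := by push_cast; ring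
    rw [e1, e2]
    have hx1' : x - 1 ≠ 0 := sub_ne_zero.mpr hx1
    field_simp
    ring

lemma geom_Ioc (x : ℂ) (hx : x ≠ 0) (hx1 : x ≠ 1) (a : ℤ) (ha : a ≤ 0) :
    ∑ t ∈ Finset.Ioc a 0, x ^ t = (x - x ^ (a + 1)) / (x - 1) := by
  have h := geom_Ioc_nat x hx hx1 (-a).toNat
  rw [show ((-a).toNat : ℤ) = -a by omega] at h
  simpa using h

lemma colsum {N : ℕ} (w : Fin N → ℂ) (i : Fin N) (hw : w i ≠ 0) (hu : w i + 1 ≠ 0)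
    (m : ℕ) (a : ℤ) (ha : a ≤ 0) :
    ∑ t ∈ Finset.Ioc a 0, vv w i ^ (m + 1) * (w i + 1) ^ t
      = vv w i ^ m * (1 - (w i + 1) ^ a) := by
  have hx1 : w i + 1 ≠ 1 := by
    intro h; exact hw (by linear_combination h)
  rw [← Finset.mul_sum, geom_Ioc _ hu hx1 a ha]
  have e1 : (w i + 1) ^ (a + 1) = (w i + 1) ^ a * (w i + 1) := zpow_add_one₀ hu a
  rw [e1, pow_succ]
  set V := vv w i ^ m with hV
  show V * vv w i * ((w i + 1 - (w i + 1) ^ a * (w i + 1)) / (w i + 1 - 1)) = _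
  rw [vv]
  field_simp
  ring

lemma det_uC_sum {n : Type*} [DecidableEq n] [Fintype n] {ι : Type*}
    (s : Finset ι) (A : Matrix n n ℂ) (j : n) (c : ι → n → ℂ) :
    ∑ t ∈ s, (A.updateCol j (c t)).det
      = (A.updateCol j (fun i => ∑ t ∈ s, c t i)).det := by
  classical
  induction s using Finset.induction with
  | empty =>
    rw [Finset.sum_empty]
    have h0 : (fun i : n => ∑ t ∈ (∅ : Finset ι), c t i)
        = (0 : ℂ) • (fun _ : n => (0 : ℂ)) := by funext i; simp
    rw [h0, Matrix.det_updateCol_smul]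
    simp
  | @insert a s' hx ih =>
    have h0 : (fun i : n => ∑ t ∈ insert a s', c t i)
        = (c a) + (fun i : n => ∑ t ∈ s', c t i) := by
      funext i; simp [Finset.sum_insert hx]
    rw [Finset.sum_insert hx, h0, Matrix.det_updateCol_add, ih]

lemma det_uC_sub {n : Type*} [DecidableEq n] [Fintype n]
    (A : Matrix n n ℂ) (j : n) (b c : n → ℂ) :
    (A.updateCol j (fun i => b i - c i)).det
      = (A.updateCol j b).det - (A.updateCol j c).det := by
  have h0 : (fun i => b i - c i) = b + ((-1 : ℂ) • c) := by funext i; simp; ring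
  rw [h0, Matrix.det_updateCol_add, Matrix.det_updateCol_smul]
  ring

lemma step_decomp {N L : ℕ} (m : ℕ) (hm : m < N) (F : (Fin N → ℤ) → ℂ)
    (a : (Fin N → ℤ) → ℤ)
    (ha : ∀ y ∈ configs N L m, ∀ t : ℤ,
      Function.update y ⟨m, hm⟩ t ∈ configs N L (m + 1) ↔ t ∈ Finset.Ioc (a y) 0) :
    ∑ z ∈ configs N L (m + 1), F z
      = ∑ y ∈ configs N L m, ∑ t ∈ Finset.Ioc (a y) 0, F (Function.update y ⟨m, hm⟩ t) := by
  rw [Finset.sum_sigma' (configs N L m) (fun y => Finset.Ioc (a y) 0)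
      (fun y t => F (Function.update y ⟨m, hm⟩ t))]
  have key : ∀ z ∈ configs N L (m + 1), Function.update z ⟨m, hm⟩ 0 ∈ configs N L m := by
    intro z hz
    obtain ⟨h1, h2, h3⟩ := mem_configs.mp hz
    refine mem_configs.mpr ⟨fun j hj => ?_, fun j hj => ?_, fun i j hj hij => ?_⟩
    · have hne : j ≠ ⟨m, hm⟩ := by
        intro h; subst h; exact absurd hj (by simp)
      rw [Function.update_of_ne hne]
      exact h1 j (by omega)
    · by_cases hje : j = ⟨m, hm⟩
      · subst hje; rw [Function.update_self]
      · rw [Function.update_of_ne hje]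
        have : (j : ℕ) ≠ m := fun h => hje (Fin.ext h)
        exact h2 j (by omega)
    · have hnej : j ≠ ⟨m, hm⟩ := by
        intro h; subst h; exact absurd hj (by simp)
      have hnei : i ≠ ⟨m, hm⟩ := by
        intro h; subst h
        have : (j : ℕ) < m := hj
        have : m < (j : ℕ) := hij
        omega
      rw [Function.update_of_ne hnej, Function.update_of_ne hnei]
      exact h3 i j (by omega) hij
  refine Finset.sum_nbij'
    (fun z => (⟨Function.update z ⟨m, hm⟩ 0, z ⟨m, hm⟩⟩ : Σ _ : Fin N → ℤ, ℤ))
    (fun p => Function.update p.1 ⟨m, hm⟩ p.2) ?_ ?_ ?_ ?_ ?_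
  · intro z hz
    rw [Finset.mem_sigma]
    refine ⟨key z hz, ?_⟩
    rw [← ha _ (key z hz) (z ⟨m, hm⟩)]
    rw [Function.update_idem, Function.update_eq_self]
    exact hz
  · intro p hp
    rw [Finset.mem_sigma] at hp
    exact (ha p.1 hp.1 p.2).mpr hp.2
  · intro z hz
    simp only
    rw [Function.update_idem, Function.update_eq_self]
  · intro p hp
    rw [Finset.mem_sigma] at hp
    have hy0 : p.1 ⟨m, hm⟩ = 0 := (mem_configs.mp hp.1).2.1 ⟨m, hm⟩ (le_refl m)
    obtain ⟨y, t⟩ := p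
    simp only at hy0 ⊢
    congr 1
    · rw [Function.update_idem]
      exact Function.update_eq_self_iff.mpr hy0.symm
    · rw [Function.update_self]
  · intro z hz
    simp only
    rw [Function.update_idem, Function.update_eq_self]

lemma key_induction {N L : ℕ} (w : Fin N → ℂ) (hw0 : ∀ i, w i ≠ 0)
    (hu0 : ∀ i, w i + 1 ≠ 0) :
    ∀ m, m ≤ N → ∑ y ∈ configs N L m, (Emat L m w y).det = (gmat L w).det := by
  intro m
  induction m with
  | zero =>
    intro _
    have hc : configs N L 0 = {fun _ => (0 : ℤ)} := by
      ext y
      rw [mem_configs, Finset.mem_singleton]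
      constructor
      · rintro ⟨-, h2, -⟩
        funext j
        exact h2 j (Nat.zero_le _)
      · rintro rfl
        exact ⟨fun j hj => absurd hj (by omega), fun j _ => rfl,
          fun i j hj _ => absurd hj (by omega)⟩
    rw [hc, Finset.sum_singleton]
    have hE : Emat L 0 w (fun _ => (0 : ℤ)) = gmat L w := by
      ext i j
      simp [Emat]
    rw [hE]
  | succ m ih =>
    intro hm1
    have hm : m < N := hm1
    have jm : Fin N := ⟨m, hm⟩
    set a : (Fin N → ℤ) → ℤ :=
      fun y => if m = 0 then -(L : ℤ) else y ⟨m - 1, lt_of_le_of_lt (Nat.pred_le m) hm⟩ with hadef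
    have ha : ∀ y ∈ configs N L m, ∀ t : ℤ,
        Function.update y ⟨m, hm⟩ t ∈ configs N L (m + 1) ↔ t ∈ Finset.Ioc (a y) 0 := by
      intro y hy t
      obtain ⟨hy1, hy2, hy3⟩ := mem_configs.mp hy
      rw [Finset.mem_Ioc]
      constructor
      · intro hz
        obtain ⟨hz1, hz2, hz3⟩ := mem_configs.mp hz
        have hb := hz1 ⟨m, hm⟩ (by simpa using Nat.lt_succ_self m)
        rw [Function.update_self] at hb
        refine ⟨?_, hb.2⟩
        by_cases hm0 : m = 0
        · rw [hadef]; simp only [if_pos hm0]; omega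
        · rw [hadef]; simp only [if_neg hm0]
          set jp : Fin N := ⟨m - 1, lt_of_le_of_lt (Nat.pred_le m) hm⟩ with hjp
          have hlt := hz3 jp ⟨m, hm⟩ (by simpa using Nat.lt_succ_self m)
            (by rw [Fin.lt_def]; show m - 1 < m; omega)
          rw [Function.update_self, Function.update_of_ne
            (by intro h; have : m - 1 = m := congrArg Fin.val h; omega)] at hlt
          exact hlt
      · intro ht
        have haL : -(L : ℤ) ≤ a y := by
          rw [hadef]
          by_cases hm0 : m = 0
          · simp [hm0]
          · simp only [if_neg hm0]
            have := (hy1 ⟨m - 1, lt_of_le_of_lt (Nat.pred_le m) hm⟩ (by simp; omega)).1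
            omega
        refine mem_configs.mpr ⟨fun j hj => ?_, fun j hj => ?_, fun i j hj hij => ?_⟩
        · by_cases hje : j = ⟨m, hm⟩
          · subst hje; rw [Function.update_self]
            constructor
            · omega
            · exact ht.2
          · have hjv : (j : ℕ) ≠ m := fun h => hje (Fin.ext h)
            rw [Function.update_of_ne hje]
            exact hy1 j (by omega)
        · have hje : j ≠ ⟨m, hm⟩ := by
            intro h; subst h; simp at hj
          have hjv : (j : ℕ) ≠ m := fun h => hje (Fin.ext h)
          rw [Function.update_of_ne hje]
          exact hy2 j (by omega)
        · by_cases hje : j = ⟨m, hm⟩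
          · subst hje
            rw [Function.update_self]
            have hiv : (i : ℕ) < m := hij
            have hnei : i ≠ ⟨m, hm⟩ := by
              intro h; have := congrArg Fin.val h; simp at this; omega
            rw [Function.update_of_ne hnei]
            have hm0 : m ≠ 0 := by omega
            have hprev : y i ≤ a y := by
              rw [hadef]; simp only [if_neg hm0]
              rcases Nat.lt_or_ge (i : ℕ) (m - 1) with hlt | hge
              · exact le_of_lt (hy3 i ⟨m - 1, lt_of_le_of_lt (Nat.pred_le m) hm⟩
                  (by simp; omega) (by rw [Fin.lt_def]; simpa using hlt))
              · have : (i : ℕ) = m - 1 := by omega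
                have : i = ⟨m - 1, lt_of_le_of_lt (Nat.pred_le m) hm⟩ := Fin.ext this
                rw [this]
            omega
          · have hjv : (j : ℕ) ≠ m := fun h => hje (Fin.ext h)
            have hnei : i ≠ ⟨m, hm⟩ := by
              intro h; have := congrArg Fin.val h; simp at this
              have : (j : ℕ) < m + 1 := hj
              have := Fin.lt_def.mp hij
              omega
            rw [Function.update_of_ne hje, Function.update_of_ne hnei]
            exact hy3 i j (by omega) hij
    rw [step_decomp m hm _ a ha]
    rw [← ih (le_of_lt hm)]
    apply Finset.sum_congr rfl
    intro y hy
    obtain ⟨hy1, hy2, hy3⟩ := mem_configs.mp hy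
    have hEdef : ∀ t : ℤ, Emat L (m + 1) w (Function.update y ⟨m, hm⟩ t)
        = (Emat L m w y).updateCol ⟨m, hm⟩
            (fun i => vv w i ^ (m + 1) * (w i + 1) ^ t) := by
      intro t
      ext i j
      rw [Matrix.updateCol_apply]
      by_cases hj : j = ⟨m, hm⟩
      · subst hj
        simp only [if_pos rfl]
        simp [Emat]
      · rw [if_neg hj]
        have hjv : (j : ℕ) ≠ m := fun h => hj (Fin.ext h)
        simp only [Emat, Matrix.of_apply]
        by_cases hj2 : (j : ℕ) < m
        · rw [if_pos hj2, if_pos (by omega), Function.update_of_ne hj]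
        · rw [if_neg hj2, if_neg (by omega)]
    calc ∑ t ∈ Finset.Ioc (a y) 0, (Emat L (m + 1) w (Function.update y ⟨m, hm⟩ t)).det
        = ∑ t ∈ Finset.Ioc (a y) 0, ((Emat L m w y).updateCol ⟨m, hm⟩
            (fun i => vv w i ^ (m + 1) * (w i + 1) ^ t)).det := by
          apply Finset.sum_congr rfl; intro t _; rw [hEdef t]
      _ = ((Emat L m w y).updateCol ⟨m, hm⟩
            (fun i => ∑ t ∈ Finset.Ioc (a y) 0, vv w i ^ (m + 1) * (w i + 1) ^ t)).det :=
          det_uC_sum _ _ _ _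
      _ = ((Emat L m w y).updateCol ⟨m, hm⟩
            (fun i => vv w i ^ m * (1 - (w i + 1) ^ (a y)))).det := by
          have hay0 : a y ≤ 0 := by
            rw [hadef]
            by_cases hm0 : m = 0
            · simp [hm0]
            · simp only [if_neg hm0]
              exact (hy1 ⟨m - 1, lt_of_le_of_lt (Nat.pred_le m) hm⟩ (by simp; omega)).2
          have hc : (fun i => ∑ t ∈ Finset.Ioc (a y) 0, vv w i ^ (m + 1) * (w i + 1) ^ t)
              = fun i => vv w i ^ m * (1 - (w i + 1) ^ (a y)) := by
            funext i; exact colsum w i (hw0 i) (hu0 i) m (a y) hay0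
          rw [hc]
      _ = (Emat L m w y).det := by
          by_cases hm0 : m = 0
          · have hcol : (fun i => vv w i ^ m * (1 - (w i + 1) ^ (a y)))
                = fun i => (Emat L m w y) i ⟨m, hm⟩ := by
              funext i
              rw [hadef]
              simp only [if_pos hm0, hm0]
              simp [Emat, gmat, pow_zero, one_mul]
            rw [hcol, Matrix.updateCol_eq_self]
          · have hsplit : (fun i => vv w i ^ m * (1 - (w i + 1) ^ (a y)))
                = fun i => vv w i ^ m - vv w i ^ m * (w i + 1) ^ (a y) := by
              funext i; ring
            rw [hsplit, det_uC_sub]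
            have hprevlt : m - 1 < N := lt_of_le_of_lt (Nat.pred_le m) hm
            have h2 : ((Emat L m w y).updateCol ⟨m, hm⟩
                (fun i => vv w i ^ m * (w i + 1) ^ (a y))).det = 0 := by
              apply Matrix.det_zero_of_column_eq
                (i := (⟨m - 1, hprevlt⟩ : Fin N)) (j := (⟨m, hm⟩ : Fin N))
              · intro h; have := congrArg Fin.val h; simp at this; omega
              · intro k
                rw [Matrix.updateCol_apply, Matrix.updateCol_apply]
                rw [if_neg (by intro h; have := congrArg Fin.val h; simp at this; omega),
                  if_pos rfl]
                simp only [Emat, Matrix.of_apply]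
                rw [if_pos (by simp; omega)]
                rw [hadef]
                simp only [if_neg hm0]
                congr 2
                · omega
            rw [h2, sub_zero]
            have hcol : (fun i => vv w i ^ m) = fun i => (Emat L m w y) i ⟨m, hm⟩ := by
              funext i
              simp only [Emat, Matrix.of_apply]
              rw [if_neg (by simp), gmat]
              simp only [Matrix.of_apply]
              rw [if_neg (by simpa using hm0)]
            rw [hcol, Matrix.updateCol_eq_self]

lemma initial_eq_configs (N L : ℕ) : initialConfigs N L = configs N L N := by
  ext y
  rw [mem_configs]
  simp only [initialConfigs, Finset.mem_filter, Fintype.mem_piFinset, Finset.mem_Icc]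
  constructor
  · rintro ⟨h1, h2⟩
    exact ⟨fun j _ => h1 j, fun j hj => absurd j.isLt (by omega),
      fun i j _ hij => h2 i j hij⟩
  · rintro ⟨h1, h2, h3⟩
    exact ⟨fun j => h1 j j.isLt, fun i j hij => h3 i j j.isLt hij⟩

lemma prod_pair {n : ℕ} (q : Fin n → ℂ) :
    ∏ i : Fin n, ∏ j ∈ Finset.Ioi i, (q i * q j) = ∏ i : Fin n, q i ^ (n - 1) := by
  have h1 : ∏ i : Fin n, ∏ j ∈ Finset.Ioi i, (q i * q j)
      = (∏ i : Fin n, ∏ j ∈ Finset.Ioi i, q i) * (∏ i : Fin n, ∏ j ∈ Finset.Ioi i, q j) := by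
    rw [← Finset.prod_mul_distrib]
    exact Finset.prod_congr rfl fun i _ => Finset.prod_mul_distrib
  rw [h1]
  have h2 : (∏ i : Fin n, ∏ j ∈ Finset.Ioi i, q i) = ∏ i : Fin n, q i ^ (n - 1 - (i : ℕ)) := by
    apply Finset.prod_congr rfl
    intro i _
    rw [Finset.prod_const, Fin.card_Ioi]
  have h3 : (∏ i : Fin n, ∏ j ∈ Finset.Ioi i, q j) = ∏ j : Fin n, q j ^ (j : ℕ) := by
    rw [Finset.prod_comm' (t' := Finset.univ) (s' := fun j => Finset.Iio j)
      (by intro x y; simp [Finset.mem_Ioi, Finset.mem_Iio])]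
    apply Finset.prod_congr rfl
    intro j _
    rw [Finset.prod_const, Fin.card_Iio]
  rw [h2, h3, ← Finset.prod_mul_distrib]
  apply Finset.prod_congr rfl
  intro i _
  rw [← pow_add]
  congr 1
  have := i.isLt
  omega

lemma vdm_scale {n : ℕ} (w : Fin n → ℂ) (hu0 : ∀ i, w i + 1 ≠ 0) :
    (Matrix.vandermonde (vv w)).det
      = (∏ i, ((w i + 1)⁻¹) ^ (n - 1)) * (Matrix.vandermonde w).det := by
  rw [Matrix.det_vandermonde, Matrix.det_vandermonde, ← prod_pair (fun i => (w i + 1)⁻¹)]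
  rw [← Finset.prod_mul_distrib]
  apply Finset.prod_congr rfl
  intro i _
  rw [← Finset.prod_mul_distrib]
  apply Finset.prod_congr rfl
  intro j _
  rw [vv, vv]
  have hi : (w i + 1)⁻¹ * (w i + 1) = 1 := inv_mul_cancel₀ (hu0 i)
  have hj : (w j + 1)⁻¹ * (w j + 1) = 1 := inv_mul_cancel₀ (hu0 j)
  linear_combination ((w i + 1)⁻¹ * w i) * hj - ((w j + 1)⁻¹ * w j) * hi

lemma rotate_det {n : ℕ} (v : Fin (n + 1) → ℂ) :
    (Matrix.of fun i j : Fin (n + 1) => v i ^ ((j : ℕ) + 1)).det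
      = (-1 : ℂ) ^ n * ((Matrix.vandermonde v).updateCol 0 (fun i => v i ^ (n + 1))).det := by
  have hsub : (Matrix.of fun i j : Fin (n + 1) => v i ^ ((j : ℕ) + 1))
      = ((Matrix.vandermonde v).updateCol 0 (fun i => v i ^ (n + 1))).submatrix
          id (finRotate (n + 1)) := by
    ext i j
    simp only [Matrix.submatrix_apply, id_eq, Matrix.updateCol_apply, Matrix.of_apply,
      finRotate_succ_apply, Matrix.vandermonde_apply]
    by_cases hj : j = Fin.last n
    · subst hj
      rw [if_pos (by simp [Fin.ext_iff, Fin.add_def])]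
      simp
    · have hlt : j < Fin.last n := lt_of_le_of_ne (Fin.le_last j) hj
      have hval : ((j + 1 : Fin (n + 1)) : ℕ) = (j : ℕ) + 1 := Fin.val_add_one_of_lt hlt
      rw [if_neg (by intro h; rw [Fin.ext_iff] at h; rw [hval] at h; simp at h), hval]
  rw [hsub, Matrix.det_permute', sign_finRotate]
  simp

end TWProof

theorem sum_over_initial_configs (N L : ℕ) (hN : 1 ≤ N) (hNL : N < L)
    (zz : ℂ) (hzz : zz ≠ 0) (w : Fin N → ℂ)
    (hw : ∀ i, w i ^ N * (w i + 1) ^ (L - N) = zz ^ L) :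
    ∑ y ∈ initialConfigs N L,
        Matrix.det (Matrix.of fun i j : Fin N =>
          w i ^ (((j : ℕ) : ℤ) + 1) * (w i + 1) ^ (y j - (((j : ℕ) : ℤ) + 1)))
      = Matrix.det (Matrix.of fun i j : Fin N =>
            w i ^ ((j : ℕ) : ℤ) * (w i + 1) ^ (-(N : ℤ) + 1))
        - (-1 : ℂ) ^ (N - 1) * zz ^ (-(L : ℤ)) *
          Matrix.det (Matrix.of fun i j : Fin N =>
            w i ^ (((j : ℕ) : ℤ) + 1) * (w i + 1) ^ (-(N : ℤ))) := by
  classical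
  obtain ⟨n, rfl⟩ : ∃ n, N = n + 1 := ⟨N - 1, by omega⟩
  have hu0 : ∀ i, w i + 1 ≠ 0 := by
    intro i h
    have h1 := hw i
    rw [h, zero_pow (by omega : L - (n + 1) ≠ 0), mul_zero] at h1
    exact hzz (pow_eq_zero_iff (by omega : L ≠ 0) |>.mp h1.symm)
  have hw0 : ∀ i, w i ≠ 0 := by
    intro i h
    have h1 := hw i
    rw [h, zero_pow (by omega : n + 1 ≠ 0), zero_mul] at h1
    exact hzz (pow_eq_zero_iff (by omega : L ≠ 0) |>.mp h1.symm)
  open TWProof in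
  have hLHS : ∑ y ∈ initialConfigs (n + 1) L,
      (Matrix.of fun i j : Fin (n + 1) =>
        w i ^ (((j : ℕ) : ℤ) + 1) * (w i + 1) ^ (y j - (((j : ℕ) : ℤ) + 1))).det
      = (TWProof.gmat L w).det := by
    rw [TWProof.initial_eq_configs]
    rw [← TWProof.key_induction (L := L) w hw0 hu0 (n + 1) le_rfl]
    apply Finset.sum_congr rfl
    intro y _
    congr 1
    ext i j
    simp only [Matrix.of_apply, TWProof.Emat, if_pos j.isLt, TWProof.vv]
    rw [mul_pow, inv_pow, zpow_sub₀ (hu0 i),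
      show (((j : ℕ) : ℤ) + 1) = (((j : ℕ) + 1 : ℕ) : ℤ) by push_cast; ring,
      zpow_natCast, zpow_natCast, div_eq_mul_inv]
    ring
  rw [hLHS]
  -- decompose gmat determinant
  have hgm : TWProof.gmat L w = (Matrix.vandermonde (TWProof.vv w)).updateCol 0
      (fun i => (fun _ : Fin (n + 1) => (1 : ℂ)) i -
        (fun i : Fin (n + 1) => (w i + 1) ^ (-(L : ℤ))) i) := by
    ext i j
    rw [Matrix.updateCol_apply]
    by_cases hj : j = 0
    · subst hj
      simp [TWProof.gmat]
    · rw [if_neg hj]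
      have hjv : (j : ℕ) ≠ 0 := fun h => hj (Fin.ext h)
      simp [TWProof.gmat, hjv, hj, Matrix.vandermonde_apply]
  rw [hgm, TWProof.det_uC_sub]
  have h1 : (Matrix.vandermonde (TWProof.vv w)).updateCol 0 (fun _ : Fin (n + 1) => (1 : ℂ))
      = Matrix.vandermonde (TWProof.vv w) := by
    have hc : (fun _ : Fin (n + 1) => (1 : ℂ))
        = fun i => Matrix.vandermonde (TWProof.vv w) i 0 := by
      funext i; simp [Matrix.vandermonde_apply]
    rw [hc, Matrix.updateCol_eq_self]
  rw [h1]
  have hucol : (fun i : Fin (n + 1) => (w i + 1) ^ (-(L : ℤ)))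
      = zz ^ (-(L : ℤ)) • (fun i => TWProof.vv w i ^ (n + 1)) := by
    funext i
    simp only [Pi.smul_apply, smul_eq_mul]
    have hz := hw i
    rw [zpow_neg, zpow_neg, zpow_natCast, zpow_natCast, ← hz, TWProof.vv, mul_pow, inv_pow]
    have hpow : (w i + 1) ^ (L - (n + 1)) * (w i + 1) ^ (n + 1) = (w i + 1) ^ L := by
      rw [← pow_add, Nat.sub_add_cancel (le_of_lt hNL)]
    have hA : w i ^ (n + 1) ≠ 0 := pow_ne_zero _ (hw0 i)
    have hB : (w i + 1) ^ (L - (n + 1)) ≠ 0 := pow_ne_zero _ (hu0 i)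
    have hC : (w i + 1) ^ (n + 1) ≠ 0 := pow_ne_zero _ (hu0 i)
    have hD : (w i + 1) ^ L ≠ 0 := pow_ne_zero _ (hu0 i)
    field_simp
    linear_combination hpow
  rw [hucol, Matrix.det_updateCol_smul]
  have hrot := TWProof.rotate_det (TWProof.vv w)
  have hsq : ((-1 : ℂ) ^ n) * ((-1 : ℂ) ^ n) = 1 := by
    rw [← pow_add, ← two_mul, pow_mul]
    norm_num
  have hM' : ((Matrix.vandermonde (TWProof.vv w)).updateCol 0
        (fun i => TWProof.vv w i ^ (n + 1))).det
      = (-1 : ℂ) ^ n * (Matrix.of fun i j : Fin (n + 1) => TWProof.vv w i ^ ((j : ℕ) + 1)).det := by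
    rw [hrot, ← mul_assoc, hsq, one_mul]
  have hB : (Matrix.of fun i j : Fin (n + 1) => TWProof.vv w i ^ ((j : ℕ) + 1)).det
      = (∏ i, TWProof.vv w i) * (Matrix.vandermonde (TWProof.vv w)).det := by
    rw [← Matrix.det_mul_column]
    congr 1
    ext i j
    simp only [Matrix.of_apply, Matrix.vandermonde_apply]
    rw [pow_succ]
    ring
  have hscale := TWProof.vdm_scale w hu0
  have hR1 : (Matrix.of fun i j : Fin (n + 1) =>
        w i ^ ((j : ℕ) : ℤ) * (w i + 1) ^ (-((n + 1 : ℕ) : ℤ) + 1)).det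
      = (∏ i, ((w i + 1)⁻¹) ^ n) * (Matrix.vandermonde w).det := by
    rw [← Matrix.det_mul_column]
    congr 1
    ext i j
    simp only [Matrix.of_apply, Matrix.vandermonde_apply]
    rw [show (-((n + 1 : ℕ) : ℤ) + 1) = -((n : ℕ) : ℤ) by push_cast; ring,
      zpow_neg, zpow_natCast, zpow_natCast, inv_pow]
    ring
  have hR2 : (Matrix.of fun i j : Fin (n + 1) =>
        w i ^ (((j : ℕ) : ℤ) + 1) * (w i + 1) ^ (-((n + 1 : ℕ) : ℤ))).det
      = (∏ i, w i * ((w i + 1)⁻¹) ^ (n + 1)) * (Matrix.vandermonde w).det := by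
    rw [← Matrix.det_mul_column]
    congr 1
    ext i j
    simp only [Matrix.of_apply, Matrix.vandermonde_apply]
    rw [show (((j : ℕ) : ℤ) + 1) = (((j : ℕ) + 1 : ℕ) : ℤ) by push_cast; ring,
      zpow_natCast, zpow_neg, zpow_natCast, pow_succ, inv_pow]
    ring
  have hprod : (∏ i, TWProof.vv w i) * (∏ i, ((w i + 1)⁻¹) ^ n)
      = ∏ i, w i * ((w i + 1)⁻¹) ^ (n + 1) := by
    rw [← Finset.prod_mul_distrib]
    apply Finset.prod_congr rfl
    intro i _
    rw [TWProof.vv, pow_succ]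
    ring
  rw [hM', hB, hscale, hR1, hR2]
  have hn1 : (n + 1) - 1 = n := by omega
  rw [hn1]
  calc (∏ i, ((w i + 1)⁻¹) ^ n) * (Matrix.vandermonde w).det -
        zz ^ (-(L : ℤ)) * ((-1 : ℂ) ^ n *
          ((∏ i, TWProof.vv w i) * ((∏ i, ((w i + 1)⁻¹) ^ n) * (Matrix.vandermonde w).det)))
      = (∏ i, ((w i + 1)⁻¹) ^ n) * (Matrix.vandermonde w).det -
        (-1 : ℂ) ^ n * zz ^ (-(L : ℤ)) *
          (((∏ i, TWProof.vv w i) * (∏ i, ((w i + 1)⁻¹) ^ n)) * (Matrix.vandermonde w).det) := by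
        ring
    _ = _ := by rw [hprod]
end

section
/- Let 1 ≤ N ≤ L be integers and let w_1, …, w_N be complex numbers with w_i ∉ {0, −1} for every i. Then ∑_{(y_1,…,y_N) ∈ 𝒴_N(L)} det[w_i^j (w_i+1)^{y_j − j}]_{i,j=1}^N = det[w_i^{j−1} (w_i+1)^{−N+1} − δ_1(j) (w_i+1)^{−L}]_{i,j=1}^N, where δ_1(j) = 1 if j = 1 and 0 otherwise (note that w_i^{j−1} = 1 when j = 1). -/
open Finset Matrix

namespace SICaux

lemma telescope (g : ℤ → ℂ) (a b : ℤ) (h : a ≤ b + 1) :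
    ∑ z ∈ Finset.Icc a b, (g z - g (z - 1)) = g b - g (a - 1) := by
  obtain ⟨n, hn⟩ : ∃ n : ℕ, b = a - 1 + n := ⟨(b - (a - 1)).toNat, by omega⟩
  subst hn
  clear h
  induction n with
  | zero => simp [Finset.Icc_eq_empty_of_lt (by omega : (a : ℤ) - 1 + (0:ℕ) < a)]
  | succ k ih =>
      have hins : Finset.Icc a (a - 1 + ((k:ℕ)+1 : ℕ)) =
          insert (a - 1 + (k:ℕ) + 1) (Finset.Icc a (a - 1 + (k:ℕ))) := by
        ext x; simp only [Finset.mem_Icc, Finset.mem_insert]; push_cast; omega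
      rw [hins, Finset.sum_insert (by simp only [Finset.mem_Icc]; omega), ih]
      have h1 : a - 1 + ((k:ℕ)+1 : ℕ) = a - 1 + (k:ℕ) + 1 := by push_cast; ring
      rw [h1]
      ring_nf

lemma det_updateCol_finsum {n : ℕ} {ι : Type*} (A : Matrix (Fin n) (Fin n) ℂ) (j : Fin n)
    (s : Finset ι) (v : ι → Fin n → ℂ) :
    ∑ z ∈ s, (A.updateCol j (v z)).det = (A.updateCol j (∑ z ∈ s, v z)).det := by
  classical
  induction s using Finset.induction_on with
  | empty =>
      simp only [Finset.sum_empty]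
      rw [eq_comm]
      exact Matrix.det_eq_zero_of_column_eq_zero j (fun i => by simp)
  | insert _ _ hk ih =>
      rw [Finset.sum_insert hk, Finset.sum_insert hk, ih, ← Matrix.det_updateCol_add]

end SICaux

namespace SICaux

noncomputable def cfg (N L m : ℕ) : Finset (Fin N → ℤ) :=
  (Fintype.piFinset fun j : Fin N =>
      if (j : ℕ) < m then Finset.Icc (-(L : ℤ) + 1) ((m : ℤ) - N) else {(0 : ℤ)}).filter
    fun y => ∀ i j : Fin N, (j : ℕ) < m → i < j → y i < y j

noncomputable def mat {N : ℕ} (w : Fin N → ℂ) (m : ℕ) (y : Fin N → ℤ) : Matrix (Fin N) (Fin N) ℂ :=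
  Matrix.of fun i j =>
    if (j : ℕ) < m then w i ^ (((j : ℕ) : ℤ) + 1) * (w i + 1) ^ (y j - (((j : ℕ) : ℤ) + 1))
    else w i ^ ((j : ℕ) : ℤ) * (w i + 1) ^ (1 - (N : ℤ))

-- key column identity
lemma key {N : ℕ} (w : Fin N → ℂ) (hw0 : ∀ i, w i ≠ 0) (hw1 : ∀ i, w i ≠ -1)
    (i : Fin N) (j : ℕ) (z : ℤ) :
    w i ^ ((j : ℤ) + 1) * (w i + 1) ^ (z - ((j : ℤ) + 1))
      = w i ^ (j : ℤ) * (w i + 1) ^ (z - (j : ℤ))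
        - w i ^ (j : ℤ) * (w i + 1) ^ (z - 1 - (j : ℤ)) := by
  have hu : w i + 1 ≠ 0 := fun h => hw1 i (by linear_combination h)
  have h1 : w i ^ ((j : ℤ) + 1) = w i ^ (j : ℤ) * w i := zpow_add_one₀ (hw0 i) _
  have h2 : (w i + 1) ^ (z - (j : ℤ)) = (w i + 1) ^ (z - 1 - (j : ℤ)) * (w i + 1) := by
    rw [← zpow_add_one₀ hu]; ring_nf
  have h3 : z - ((j : ℤ) + 1) = z - 1 - (j : ℤ) := by ring
  rw [h1, h2, h3]; ring

lemma mem_cfg {N L m : ℕ} {y : Fin N → ℤ} :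
    y ∈ cfg N L m ↔
      (∀ j : Fin N, (j : ℕ) < m → -(L : ℤ) + 1 ≤ y j ∧ y j ≤ (m : ℤ) - N) ∧
      (∀ j : Fin N, m ≤ (j : ℕ) → y j = 0) ∧
      (∀ i j : Fin N, (j : ℕ) < m → i < j → y i < y j) := by
  simp only [cfg, Finset.mem_filter, Fintype.mem_piFinset]
  constructor
  · rintro ⟨h, h3⟩
    refine ⟨fun j hj => ?_, fun j hj => ?_, h3⟩
    · have := h j; rw [if_pos hj, Finset.mem_Icc] at this; exact this
    · have := h j; rw [if_neg (by omega), Finset.mem_singleton] at this; exact this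
  · rintro ⟨h1, h2, h3⟩
    refine ⟨fun j => ?_, h3⟩
    by_cases hj : (j : ℕ) < m
    · rw [if_pos hj, Finset.mem_Icc]; exact h1 j hj
    · rw [if_neg hj, Finset.mem_singleton]; exact h2 j (by omega)

end SICaux
namespace SICaux

lemma step {N L : ℕ} (w : Fin N → ℂ) (hw0 : ∀ i, w i ≠ 0) (hw1 : ∀ i, w i ≠ -1)
    (m : ℕ) (h1 : 1 ≤ m) (hmN : m < N) :
    ∑ y ∈ cfg N L (m + 1), (mat w (m + 1) y).det
      = ∑ y ∈ cfg N L m, (mat w m y).det := by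
  classical
  set m' : Fin N := ⟨m, hmN⟩ with hm'def
  set p : Fin N := ⟨m - 1, by omega⟩ with hpdef
  have hm'val : (m' : ℕ) = m := rfl
  have hpval : (p : ℕ) = m - 1 := rfl
  have hpm' : p < m' := by rw [Fin.lt_def, hpval, hm'val]; omega
  have hpne : p ≠ m' := ne_of_lt hpm'
  -- the fiber map
  have hmaps : ∀ y ∈ cfg N L (m + 1), Function.update y m' (0 : ℤ) ∈ cfg N L m := by
    intro y hy
    obtain ⟨A1, A2, A3⟩ := mem_cfg.mp hy
    refine mem_cfg.mpr ⟨fun j hj => ?_, fun j hj => ?_, fun i j hj hij => ?_⟩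
    · have hjm : j ≠ m' := by intro h; rw [h, hm'val] at hj; omega
      rw [Function.update_of_ne hjm]
      obtain ⟨hl, _⟩ := A1 j (by omega)
      have hlt : y j < y m' := A3 j m' (by rw [hm'val]; omega)
        (by rw [Fin.lt_def, hm'val]; omega)
      have hub : y m' ≤ ((m : ℤ) + 1) - N := by
        have := (A1 m' (by rw [hm'val]; omega)).2; push_cast at this ⊢; linarith
      exact ⟨hl, by omega⟩
    · by_cases hjm : j = m'
      · rw [hjm, Function.update_self]
      · rw [Function.update_of_ne hjm]
        refine A2 j ?_
        have : (j : ℕ) ≠ m := fun h => hjm (Fin.ext (by rw [hm'val, h]))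
        omega
    · have hjm : j ≠ m' := by intro h; rw [h, hm'val] at hj; omega
      have him : i ≠ m' := by
        intro h
        have h2 : (i : ℕ) < (j : ℕ) := hij
        rw [h, hm'val] at h2; omega
      rw [Function.update_of_ne hjm, Function.update_of_ne him]
      exact A3 i j (by omega) hij
  rw [← Finset.sum_fiberwise_of_maps_to hmaps]
  refine Finset.sum_congr rfl fun y' hy' => ?_
  obtain ⟨B1, B2, B3⟩ := mem_cfg.mp hy'
  have hy'm' : y' m' = 0 := B2 m' (by rw [hm'val])
  have hy'p := B1 p (by rw [hpval]; omega)
  -- reindex the fiber by the value of the last active coordinate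
  have hfiber :
      ∑ y ∈ (cfg N L (m + 1)).filter (fun y => Function.update y m' (0 : ℤ) = y'),
          (mat w (m + 1) y).det
        = ∑ z ∈ Finset.Icc (y' p + 1) ((m : ℤ) + 1 - N),
            (mat w (m + 1) (Function.update y' m' z)).det := by
    refine Finset.sum_bij' (fun y _ => y m') (fun z _ => Function.update y' m' z)
      ?_ ?_ ?_ ?_ ?_
    · -- hi
      intro y hy
      rw [Finset.mem_filter] at hy
      obtain ⟨hy, hphi⟩ := hy
      obtain ⟨A1, A2, A3⟩ := mem_cfg.mp hy
      rw [Finset.mem_Icc]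
      have hyp : y p = y' p := by rw [← hphi, Function.update_of_ne hpne]
      have hlt : y p < y m' := A3 p m' (by rw [hm'val]; omega) hpm'
      have hub := (A1 m' (by rw [hm'val]; omega)).2
      push_cast at hub
      omega
    · -- hj
      intro z hz
      rw [Finset.mem_Icc] at hz
      rw [Finset.mem_filter]
      constructor
      · refine mem_cfg.mpr ⟨fun j hj => ?_, fun j hj => ?_, fun i j hj hij => ?_⟩
        · by_cases hjm : j = m'
          · rw [hjm, Function.update_self]
            push_cast
            exact ⟨by omega, by omega⟩
          · rw [Function.update_of_ne hjm]
            have hjlt : (j : ℕ) < m := by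
              have : (j : ℕ) ≠ m := fun h => hjm (Fin.ext (by rw [hm'val, h]))
              omega
            obtain ⟨hl, hu⟩ := B1 j hjlt
            push_cast
            exact ⟨hl, by omega⟩
        · have hjm : j ≠ m' := by intro h; rw [h, hm'val] at hj; omega
          rw [Function.update_of_ne hjm]
          exact B2 j (by omega)
        · have him : i ≠ m' := by
            intro h
            have h2 : (i : ℕ) < (j : ℕ) := hij
            rw [h, hm'val] at h2; omega
          rw [Function.update_of_ne him]
          by_cases hjm : j = m'
          · rw [hjm, Function.update_self]
            have hile : y' i ≤ y' p := by
              have hib : (i : ℕ) ≤ m - 1 := by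
                have h2 : (i : ℕ) < (j : ℕ) := hij
                rw [hjm, hm'val] at h2; omega
              rcases eq_or_lt_of_le hib with he | hlt
              · have : i = p := Fin.ext (by rw [hpval, he])
                rw [this]
              · refine le_of_lt (B3 i p (by rw [hpval]; omega) ?_)
                rw [Fin.lt_def, hpval]; omega
            omega
          · rw [Function.update_of_ne hjm]
            have hjlt : (j : ℕ) < m := by
              have : (j : ℕ) ≠ m := fun h => hjm (Fin.ext (by rw [hm'val, h]))
              omega
            exact B3 i j hjlt hij
      · funext k
        by_cases hk : k = m'
        · rw [hk, Function.update_self, hy'm']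
        · rw [Function.update_of_ne hk, Function.update_of_ne hk]
    · -- left_inv
      intro y hy
      rw [Finset.mem_filter] at hy
      funext k
      by_cases hk : k = m'
      · rw [hk, Function.update_self]
      · rw [Function.update_of_ne hk, ← hy.2, Function.update_of_ne hk]
    · -- right_inv
      intro z hz
      rw [Function.update_self]
    · -- values
      intro y hy
      rw [Finset.mem_filter] at hy
      have : Function.update y' m' (y m') = y := by
        funext k
        by_cases hk : k = m'
        · rw [hk, Function.update_self]
        · rw [Function.update_of_ne hk, ← hy.2, Function.update_of_ne hk]
      rw [this]
  rw [hfiber]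
  -- now evaluate the inner sum
  have hA : ∀ z : ℤ, mat w (m + 1) (Function.update y' m' z)
      = (mat w (m + 1) y').updateCol m'
          (fun i => w i ^ ((m : ℤ) + 1) * (w i + 1) ^ (z - ((m : ℤ) + 1))) := by
    intro z
    ext i j
    rw [Matrix.updateCol_apply]
    by_cases hj : j = m'
    · rw [if_pos hj, hj]
      simp only [mat, Matrix.of_apply, Function.update_self]
      rw [if_pos (by omega)]
    · rw [if_neg hj]
      simp only [mat, Matrix.of_apply]
      rw [Function.update_of_ne hj]
  simp only [hA]
  rw [det_updateCol_finsum]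
  have hcolsum :
      (∑ z ∈ Finset.Icc (y' p + 1) ((m : ℤ) + 1 - N),
          fun i => w i ^ ((m : ℤ) + 1) * (w i + 1) ^ (z - ((m : ℤ) + 1)))
        = (fun i => w i ^ (m : ℤ) * (w i + 1) ^ (1 - (N : ℤ)))
          - (fun i => (mat w (m + 1) y') i p) := by
    funext i
    simp only [Finset.sum_apply, Pi.sub_apply]
    have hrw : ∀ z : ℤ, w i ^ ((m : ℤ) + 1) * (w i + 1) ^ (z - ((m : ℤ) + 1))
        = (fun t => w i ^ (m : ℤ) * (w i + 1) ^ (t - (m : ℤ))) z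
          - (fun t => w i ^ (m : ℤ) * (w i + 1) ^ (t - (m : ℤ))) (z - 1) := by
      intro z
      simpa using key w hw0 hw1 i m z
    rw [Finset.sum_congr rfl fun z _ => hrw z]
    rw [telescope _ _ _ (by omega)]
    have e1 : (m : ℤ) + 1 - (N : ℤ) - m = 1 - (N : ℤ) := by ring
    have e2 : y' p + 1 - 1 = y' p := by ring
    rw [e1, e2]
    congr 1
    simp only [mat, Matrix.of_apply]
    rw [if_pos (by omega)]
    have e3 : (((m - 1 : ℕ) : ℤ) + 1) = (m : ℤ) := by omega
    rw [e3]
  rw [hcolsum]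
  rw [sub_eq_add_neg, Matrix.det_updateCol_add]
  have hneg : (-(fun i => (mat w (m + 1) y') i p))
      = (-1 : ℂ) • (fun i => (mat w (m + 1) y') i p) := by
    funext i; simp
  rw [hneg, Matrix.det_updateCol_smul,
    Matrix.det_updateCol_eq_zero hpne, mul_zero, add_zero]
  -- finally identify the resulting matrix with `mat w m y'`
  congr 1
  ext i j
  rw [Matrix.updateCol_apply]
  by_cases hj : j = m'
  · rw [if_pos hj]
    simp only [mat, Matrix.of_apply]
    rw [hj, if_neg (by omega)]
  · rw [if_neg hj]
    simp only [mat, Matrix.of_apply]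
    have hjm : (j : ℕ) ≠ m := fun h => hj (Fin.ext (by rw [hm'val, h]))
    by_cases hjlt : (j : ℕ) < m
    · rw [if_pos hjlt, if_pos (by omega)]
    · rw [if_neg hjlt, if_neg (by omega)]

end SICaux
namespace SICaux

lemma base {N L : ℕ} (w : Fin N → ℂ) (hw0 : ∀ i, w i ≠ 0) (hw1 : ∀ i, w i ≠ -1)
    (hN : 1 ≤ N) (hNL : N ≤ L) :
    ∑ y ∈ cfg N L 1, (mat w 1 y).det
      = Matrix.det (Matrix.of fun i j : Fin N =>
          w i ^ ((j : ℕ) : ℤ) * (w i + 1) ^ (-(N : ℤ) + 1)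
            - (if (j : ℕ) = 0 then (w i + 1) ^ (-(L : ℤ)) else 0)) := by
  classical
  set i0 : Fin N := ⟨0, hN⟩ with hi0def
  have hi0val : (i0 : ℕ) = 0 := rfl
  set y0 : Fin N → ℤ := fun _ => 0 with hy0def
  have hre : ∑ y ∈ cfg N L 1, (mat w 1 y).det
      = ∑ z ∈ Finset.Icc (-(L : ℤ) + 1) ((1 : ℤ) - N),
          (mat w 1 (Function.update y0 i0 z)).det := by
    refine Finset.sum_bij' (fun y _ => y i0) (fun z _ => Function.update y0 i0 z)
      ?_ ?_ ?_ ?_ ?_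
    · intro y hy
      obtain ⟨B1, B2, B3⟩ := mem_cfg.mp hy
      have := B1 i0 (by rw [hi0val]; omega)
      rw [Finset.mem_Icc]
      push_cast at this ⊢
      omega
    · intro z hz
      rw [Finset.mem_Icc] at hz
      refine mem_cfg.mpr ⟨fun j hj => ?_, fun j hj => ?_, fun i j hj hij => ?_⟩
      · have : j = i0 := Fin.ext (by rw [hi0val]; omega)
        rw [this, Function.update_self]
        push_cast
        exact ⟨by omega, by omega⟩
      · have hji : j ≠ i0 := fun h => by rw [h, hi0val] at hj; omega
        rw [Function.update_of_ne hji]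
      · have h2 : (i : ℕ) < (j : ℕ) := hij
        omega
    · intro y hy
      obtain ⟨B1, B2, B3⟩ := mem_cfg.mp hy
      funext k
      by_cases hk : k = i0
      · rw [hk, Function.update_self]
      · rw [Function.update_of_ne hk]
        have : (k : ℕ) ≠ 0 := fun h => hk (Fin.ext (by rw [hi0val, h]))
        exact (B2 k (by omega)).symm
    · intro z hz
      rw [Function.update_self]
    · intro y hy
      obtain ⟨B1, B2, B3⟩ := mem_cfg.mp hy
      have : Function.update y0 i0 (y i0) = y := by
        funext k
        by_cases hk : k = i0
        · rw [hk, Function.update_self]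
        · rw [Function.update_of_ne hk]
          have : (k : ℕ) ≠ 0 := fun h => hk (Fin.ext (by rw [hi0val, h]))
          exact (B2 k (by omega)).symm
      rw [this]
  rw [hre]
  have hA : ∀ z : ℤ, mat w 1 (Function.update y0 i0 z)
      = (mat w 1 y0).updateCol i0
          (fun i => w i ^ (0 + 1 : ℤ) * (w i + 1) ^ (z - (0 + 1 : ℤ))) := by
    intro z
    ext i j
    rw [Matrix.updateCol_apply]
    by_cases hj : j = i0
    · rw [if_pos hj, hj]
      simp only [mat, Matrix.of_apply, Function.update_self]
      rw [if_pos (by omega)]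
      norm_num
    · rw [if_neg hj]
      simp only [mat, Matrix.of_apply]
      rw [Function.update_of_ne hj]
  simp only [hA]
  rw [det_updateCol_finsum]
  have hcolsum :
      (∑ z ∈ Finset.Icc (-(L : ℤ) + 1) ((1 : ℤ) - N),
          fun i => w i ^ (0 + 1 : ℤ) * (w i + 1) ^ (z - (0 + 1 : ℤ)))
        = fun i => (w i + 1) ^ (1 - (N : ℤ)) - (w i + 1) ^ (-(L : ℤ)) := by
    funext i
    simp only [Finset.sum_apply]
    have hrw : ∀ z : ℤ, w i ^ (0 + 1 : ℤ) * (w i + 1) ^ (z - (0 + 1 : ℤ))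
        = (fun t => (w i + 1) ^ t) z - (fun t => (w i + 1) ^ t) (z - 1) := by
      intro z
      have := key w hw0 hw1 i 0 z
      push_cast at this ⊢
      simpa using this
    rw [Finset.sum_congr rfl fun z _ => hrw z]
    rw [telescope _ _ _ (by omega)]
    have e2 : -(L : ℤ) + 1 - 1 = -(L : ℤ) := by ring
    rw [e2]
  rw [hcolsum]
  congr 1
  ext i j
  rw [Matrix.updateCol_apply]
  by_cases hj : j = i0
  · rw [if_pos hj, hj, Matrix.of_apply, hi0val]
    rw [if_pos rfl]
    have : ((0 : ℕ) : ℤ) = 0 := rfl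
    rw [this, zpow_zero, one_mul]
    have e : (1 : ℤ) - (N : ℤ) = -(N : ℤ) + 1 := by ring
    rw [e]
  · rw [if_neg hj, Matrix.of_apply]
    simp only [mat, Matrix.of_apply]
    have hjne : (j : ℕ) ≠ 0 := fun h => hj (Fin.ext (by rw [hi0val, h]))
    rw [if_neg (by omega), if_neg hjne, sub_zero]
    have e : (1 : ℤ) - (N : ℤ) = -(N : ℤ) + 1 := by ring
    rw [e]

end SICaux

theorem sum_over_initial_configs_eq_det (N L : ℕ) (hN : 1 ≤ N) (hNL : N ≤ L)
    (w : Fin N → ℂ) (hw0 : ∀ i, w i ≠ 0) (hw1 : ∀ i, w i ≠ -1) :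
    ∑ y ∈ initialConfigs N L,
        Matrix.det (Matrix.of fun i j : Fin N =>
          w i ^ (((j : ℕ) : ℤ) + 1) * (w i + 1) ^ (y j - (((j : ℕ) : ℤ) + 1)))
      = Matrix.det (Matrix.of fun i j : Fin N =>
          w i ^ ((j : ℕ) : ℤ) * (w i + 1) ^ (-(N : ℤ) + 1)
            - (if (j : ℕ) = 0 then (w i + 1) ^ (-(L : ℤ)) else 0)) := by
  classical
  open SICaux in
  have hchain : ∀ m, 1 ≤ m → m ≤ N →
      ∑ y ∈ cfg N L m, (mat w m y).det
        = Matrix.det (Matrix.of fun i j : Fin N =>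
            w i ^ ((j : ℕ) : ℤ) * (w i + 1) ^ (-(N : ℤ) + 1)
              - (if (j : ℕ) = 0 then (w i + 1) ^ (-(L : ℤ)) else 0)) := by
    intro m hm
    induction m, hm using Nat.le_induction with
    | base => intro _; exact base w hw0 hw1 hN hNL
    | succ m hm ih =>
        intro hmN
        rw [step w hw0 hw1 m hm (by omega)]
        exact ih (by omega)
  have hfin := hchain N hN le_rfl
  rw [← hfin]
  have hset : initialConfigs N L = cfg N L N := by
    ext y
    simp only [initialConfigs, cfg, Finset.mem_filter, Fintype.mem_piFinset]
    constructor
    · rintro ⟨h1, h2⟩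
      refine ⟨fun j => ?_, fun i j _ => h2 i j⟩
      have := h1 j
      rw [Finset.mem_Icc] at this
      rw [if_pos j.isLt, Finset.mem_Icc]
      omega
    · rintro ⟨h1, h2⟩
      refine ⟨fun j => ?_, fun i j hij => h2 i j j.isLt hij⟩
      have := h1 j
      rw [if_pos j.isLt, Finset.mem_Icc] at this
      rw [Finset.mem_Icc]
      omega
  rw [hset]
  refine Finset.sum_congr rfl fun y _ => ?_
  congr 1
  ext i j
  simp only [SICaux.mat, Matrix.of_apply]
  rw [if_pos j.isLt]
end

section
/- Let 1 ≤ N < L be integers and set ρ = N/L and r₀ = ρ^ρ (1−ρ)^{1−ρ}. For every complex number w with Re w = −ρ one has |w^N (w+1)^{L−N}| ≥ r₀^L. Consequently, for every complex 𝐳 with |𝐳| < r₀, the polynomial q_𝐳(w) = w^N (w+1)^{L−N} − 𝐳^L has no root on the vertical line Re w = −ρ. -/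
theorem no_root_on_critical_line (N L : ℕ) (hN : 1 ≤ N) (hNL : N < L)
    (ρ r₀ : ℝ) (hρ : ρ = (N : ℝ) / L)
    (hr₀ : r₀ = ρ ^ ρ * (1 - ρ) ^ (1 - ρ)) :
    (∀ w : ℂ, w.re = -ρ → r₀ ^ L ≤ ‖w ^ N * (w + 1) ^ (L - N)‖) ∧
    ∀ zz : ℂ, ‖zz‖ < r₀ →
      ∀ w : ℂ, w.re = -ρ → w ^ N * (w + 1) ^ (L - N) - zz ^ L ≠ 0 := by
  have hLpos : (0:ℝ) < L := by
    have : 0 < L := lt_of_le_of_lt (Nat.zero_le N) hNL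
    exact_mod_cast this
  have hρ0 : 0 < ρ := by
    rw [hρ]
    apply div_pos _ hLpos
    exact_mod_cast hN
  have hρ1 : ρ < 1 := by
    rw [hρ, div_lt_one hLpos]
    exact_mod_cast hNL
  have hρL : ρ * L = (N : ℝ) := by
    rw [hρ]; field_simp
  have h1ρL : (1 - ρ) * L = ((L - N : ℕ) : ℝ) := by
    rw [Nat.cast_sub hNL.le, hρ]; field_simp
  have hr₀L : r₀ ^ L = ρ ^ N * (1 - ρ) ^ (L - N) := by
    rw [hr₀, mul_pow, ← Real.rpow_natCast (ρ ^ ρ) L, ← Real.rpow_mul hρ0.le, hρL,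
      ← Real.rpow_natCast ((1 - ρ) ^ (1 - ρ)) L, ← Real.rpow_mul (by linarith), h1ρL,
      Real.rpow_natCast, Real.rpow_natCast]
  have main : ∀ w : ℂ, w.re = -ρ → r₀ ^ L ≤ ‖w ^ N * (w + 1) ^ (L - N)‖ := by
    intro w hw
    have h1 : ρ ≤ ‖w‖ := by
      calc ρ = |w.re| := by rw [hw, abs_neg, abs_of_pos hρ0]
        _ ≤ ‖w‖ := Complex.abs_re_le_norm w
    have h2 : 1 - ρ ≤ ‖w + 1‖ := by
      calc 1 - ρ = |(w + 1).re| := by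
            rw [Complex.add_re, hw, Complex.one_re, abs_of_pos (by linarith)]; ring
        _ ≤ ‖w + 1‖ := Complex.abs_re_le_norm _
    rw [norm_mul, norm_pow, norm_pow, hr₀L]
    exact mul_le_mul (pow_le_pow_left₀ hρ0.le h1 N)
      (pow_le_pow_left₀ (by linarith) h2 _) (pow_nonneg (by linarith) _) (pow_nonneg (norm_nonneg w) N)
  refine ⟨main, fun zz hz w hw h => ?_⟩
  have hzL : ‖zz ^ L‖ < r₀ ^ L := by
    rw [norm_pow]
    exact pow_lt_pow_left₀ hz (norm_nonneg zz)
      (Nat.zero_lt_of_lt hNL).ne'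
  have heq : w ^ N * (w + 1) ^ (L - N) = zz ^ L := sub_eq_zero.mp h
  have := main w hw
  rw [heq] at this
  linarith
end

section
/- Let 1 ≤ N < L be integers, set ρ = N/L and r₀ = ρ^ρ (1−ρ)^{1−ρ}, and let 𝐳 be a complex number with 0 < |𝐳| < r₀. Then the polynomial q_𝐳(w) = w^N (w+1)^{L−N} − 𝐳^L has L distinct roots; that is, every root of q_𝐳 is simple. -/
open Polynomial in
theorem roots_are_simple (N L : ℕ) (hN : 1 ≤ N) (hNL : N < L)
    (ρ r₀ : ℝ) (hρ : ρ = (N : ℝ) / L)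
    (hr₀ : r₀ = ρ ^ ρ * (1 - ρ) ^ (1 - ρ))
    (zz : ℂ) (hzz0 : 0 < ‖zz‖) (hzzr : ‖zz‖ < r₀) :
    Multiset.card (X ^ N * (X + 1) ^ (L - N) - C (zz ^ L) : ℂ[X]).roots = L ∧
    (X ^ N * (X + 1) ^ (L - N) - C (zz ^ L) : ℂ[X]).roots.Nodup := by
  classical
  set c : ℂ := zz ^ L with hc
  have hzne : zz ≠ 0 := by
    intro h; rw [h] at hzz0; simp at hzz0
  have hcne : c ≠ 0 := pow_ne_zero _ hzne
  have hLpos : 0 < L := lt_of_le_of_lt (Nat.zero_le _) hNL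
  have hLne : (L : ℝ) ≠ 0 := Nat.cast_ne_zero.mpr hLpos.ne'
  have hX1 : (X + 1 : ℂ[X]) = X + C 1 := by rw [map_one]
  have hqmonic : (X ^ N * (X + 1) ^ (L - N) : ℂ[X]).Monic := by
    rw [hX1]; exact (monic_X_pow N).mul ((monic_X_add_C (1:ℂ)).pow _)
  have hqdeg : (X ^ N * (X + 1) ^ (L - N) : ℂ[X]).natDegree = L := by
    rw [hX1, natDegree_mul (monic_X_pow N).ne_zero ((monic_X_add_C (1:ℂ)).pow _).ne_zero,
      natDegree_X_pow, natDegree_pow, natDegree_X_add_C]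
    omega
  set p : ℂ[X] := X ^ N * (X + 1) ^ (L - N) - C c with hp
  have hpdeg : p.natDegree = L := by rw [hp, natDegree_sub_C, hqdeg]
  have hpne : p ≠ 0 := by
    intro h
    rw [h, natDegree_zero] at hpdeg
    omega
  -- positivity facts about ρ
  have hρpos : 0 < ρ := by
    rw [hρ]; positivity
  have hρlt : ρ < 1 := by
    rw [hρ, div_lt_one (by exact_mod_cast hLpos)]
    exact_mod_cast hNL
  have h1ρ : 0 < 1 - ρ := by linarith
  -- r₀ ^ L = ρ ^ N * (1-ρ)^(L-N)
  have hρL : ρ * L = N := by rw [hρ]; field_simp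
  have h1ρL : (1 - ρ) * L = ((L - N : ℕ) : ℝ) := by
    rw [hρ, Nat.cast_sub hNL.le]; field_simp
  have hr0L : r₀ ^ L = ρ ^ N * (1 - ρ) ^ (L - N) := by
    rw [hr₀, mul_pow]
    rw [← Real.rpow_natCast (ρ ^ ρ) L, ← Real.rpow_natCast ((1-ρ) ^ (1-ρ)) L,
      ← Real.rpow_mul hρpos.le, ← Real.rpow_mul h1ρ.le, hρL, h1ρL,
      Real.rpow_natCast, Real.rpow_natCast]
  have hr0pos : 0 < r₀ := lt_trans hzz0 hzzr
  -- no common root of p and derivative p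
  have key : ∀ a : ℂ, p.IsRoot a → ¬ (derivative p).IsRoot a := by
    intro a h0 h1
    have h0' : a ^ N * (a + 1) ^ (L - N) = c := by
      have := h0
      simp only [hp, IsRoot, eval_sub, eval_mul, eval_pow, eval_add, eval_X, eval_one,
        eval_C, sub_eq_zero] at this
      exact this
    have hane : a ≠ 0 := by
      intro h; rw [h] at h0'; simp [zero_pow (by omega : N ≠ 0)] at h0'
      exact hcne h0'.symm
    have ha1ne : a + 1 ≠ 0 := by
      intro h; rw [h] at h0'; simp [zero_pow (by omega : L - N ≠ 0)] at h0'
      exact hcne h0'.symm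
    have h1' : (N : ℂ) * a ^ (N - 1) * (a + 1) ^ (L - N)
        + a ^ N * ((L - N : ℕ) * (a + 1) ^ (L - N - 1)) = 0 := by
      have := h1
      simp only [hp, IsRoot, derivative_sub, derivative_C, sub_zero, derivative_mul,
        derivative_X_pow, derivative_pow, derivative_add, derivative_X, derivative_one,
        add_zero, mul_one, eval_add, eval_mul, eval_pow, eval_natCast, eval_C, eval_X,
        eval_one] at this
      linear_combination this
    -- multiply by a * (a+1)
    obtain ⟨m, hm⟩ : ∃ m, N = m + 1 := ⟨N - 1, by omega⟩
    obtain ⟨k, hk⟩ : ∃ k, L - N = k + 1 := ⟨L - N - 1, by omega⟩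
    have hLN : ((L - N : ℕ) : ℂ) = (L : ℂ) - N := by rw [Nat.cast_sub hNL.le]
    have haN : a ^ N = a ^ m * a := by rw [hm, pow_succ]
    have ha1k : (a + 1) ^ (L - N) = (a + 1) ^ k * (a + 1) := by rw [hk, pow_succ]
    have hkey : ((L : ℂ) * a + N) * c = 0 := by
      rw [hLN, show N - 1 = m from by omega, show L - N - 1 = k from by omega,
        haN, ha1k] at h1'
      rw [haN, ha1k] at h0'
      linear_combination (a * (a + 1)) * h1' - ((L : ℂ) * a + (N : ℂ)) * h0'
    have haval : a = -(N / L : ℂ) := by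
      rcases mul_eq_zero.mp hkey with h | h
      · have hLc : (L : ℂ) ≠ 0 := Nat.cast_ne_zero.mpr hLpos.ne'
        field_simp
        linear_combination h
      · exact absurd h hcne
    -- now compute absolute values
    have habs : ‖c‖ = ρ ^ N * (1 - ρ) ^ (L - N) := by
      rw [← h0', norm_mul, norm_pow, norm_pow, haval]
      have h1 : ‖(-(↑N / ↑L : ℂ))‖ = ρ := by
        rw [norm_neg, norm_div, Complex.norm_natCast, Complex.norm_natCast, hρ]
      have h2 : ‖(-(↑N / ↑L : ℂ) + 1)‖ = 1 - ρ := by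
        have : (-(↑N / ↑L : ℂ) + 1) = ((1 - ρ : ℝ) : ℂ) := by
          rw [hρ]; push_cast; ring
        rw [this, Complex.norm_real, Real.norm_eq_abs, abs_of_pos h1ρ]
      rw [h1, h2]
    have hlt : ‖c‖ < r₀ ^ L := by
      rw [hc, norm_pow]
      exact pow_lt_pow_left₀ hzzr (norm_nonneg zz) hLpos.ne'
    rw [habs, hr0L] at hlt
    exact lt_irrefl _ hlt
  constructor
  · rw [splits_iff_card_roots.mp (IsAlgClosed.splits p), hpdeg]
  · rw [Multiset.nodup_iff_count_le_one]
    intro a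
    rw [count_roots]
    by_contra h
    push_neg at h
    obtain ⟨h0, h1⟩ := (one_lt_rootMultiplicity_iff_isRoot hpne).mp h
    exact key a h0 h1
end

section
/- Let s > 0 be a real number and let z be a complex number with |z| < 1. Then the integral ∫_0^∞ x^{s−1}/(e^x − z) dx converges, and (z/Γ(s)) · ∫_0^∞ x^{s−1}/(e^x − z) dx = ∑_{k=1}^∞ z^k/k^s = Li_s(z); i.e., the integral representation of the polylogarithm agrees with its power series on the unit disk. -/
open MeasureTheory Set

open MeasureTheory in
theorem polylog_integral_representation (s : ℝ) (hs : 0 < s)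
    (z : ℂ) (hz : ‖z‖ < 1) :
    IntegrableOn
      (fun x : ℝ => ((x ^ (s - 1) : ℝ) : ℂ) / ((Real.exp x : ℂ) - z))
      (Set.Ioi 0) ∧
    z / (Real.Gamma s : ℂ) *
        ∫ x in Set.Ioi (0 : ℝ), ((x ^ (s - 1) : ℝ) : ℂ) / ((Real.exp x : ℂ) - z)
      = ∑' k : ℕ, z ^ (k + 1) / ((((k + 1 : ℕ) : ℝ) ^ s : ℝ) : ℂ) := by
  set r : ℝ := ‖z‖ with hr
  have hr0 : 0 ≤ r := norm_nonneg z
  have hr1 : r < 1 := hz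
  -- denominator bound
  have hden : ∀ x : ℝ, 0 < x → (1 - r) * Real.exp x ≤ ‖(Real.exp x : ℂ) - z‖ := by
    intro x hx
    have h1 : Real.exp x - r ≤ ‖(Real.exp x : ℂ) - z‖ := by
      have := norm_sub_norm_le ((Real.exp x : ℂ)) z
      simpa [Complex.norm_real, Real.norm_eq_abs, abs_of_pos (Real.exp_pos x)] using this
    have h2 : (1 - r) * Real.exp x ≤ Real.exp x - r := by
      have : r * 1 ≤ r * Real.exp x :=
        mul_le_mul_of_nonneg_left (by linarith [Real.one_le_exp hx.le]) hr0
      nlinarith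
    linarith
  have hdenne : ∀ x : ℝ, 0 < x → (Real.exp x : ℂ) - z ≠ 0 := by
    intro x hx h
    have := hden x hx
    rw [h] at this
    simp at this
    nlinarith [Real.exp_pos x]
  -- measurability of the integrand
  have hmeas : Measurable (fun x : ℝ => ((x ^ (s - 1) : ℝ) : ℂ) / ((Real.exp x : ℂ) - z)) := by
    fun_prop
  -- integrability
  have hint : IntegrableOn
      (fun x : ℝ => ((x ^ (s - 1) : ℝ) : ℂ) / ((Real.exp x : ℂ) - z)) (Set.Ioi 0) := by
    apply Integrable.mono' (((Real.GammaIntegral_convergent hs).const_mul (1 - r)⁻¹))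
    · exact hmeas.aestronglyMeasurable
    · filter_upwards [ae_restrict_mem measurableSet_Ioi] with x hx
      rw [Set.mem_Ioi] at hx
      have hx1 : (0:ℝ) ≤ x ^ (s-1) := Real.rpow_nonneg hx.le _
      have hne := hdenne x hx
      have hd := hden x hx
      have hdpos : 0 < ‖(Real.exp x : ℂ) - z‖ := norm_pos_iff.mpr hne
      rw [norm_div, Complex.norm_real, Real.norm_eq_abs,
        abs_of_nonneg hx1]
      rw [div_le_iff₀ hdpos]
      have h1r : (0:ℝ) < 1 - r := by linarith
      calc x ^ (s-1) = (1-r)⁻¹ * (Real.exp (-x) * x ^ (s-1)) * ((1-r) * Real.exp x) := by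
              rw [Real.exp_neg]
              field_simp
        _ ≤ (1-r)⁻¹ * (Real.exp (-x) * x ^ (s-1)) * ‖(Real.exp x : ℂ) - z‖ := by
              apply mul_le_mul_of_nonneg_left hd
              positivity
  refine ⟨hint, ?_⟩
  -- the series of functions
  set F : ℕ → ℝ → ℂ := fun k x => ((x ^ (s - 1) * Real.exp (-((k+1) * x)) : ℝ) : ℂ) * z ^ k with hF
  have hFreal_int : ∀ k : ℕ, IntegrableOn
      (fun x : ℝ => x ^ (s - 1) * Real.exp (-((k+1 : ℝ) * x))) (Set.Ioi 0) := by
    intro k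
    apply Integrable.mono' (Real.GammaIntegral_convergent hs)
    · apply Measurable.aestronglyMeasurable; fun_prop
    · filter_upwards [ae_restrict_mem measurableSet_Ioi] with x hx
      rw [Set.mem_Ioi] at hx
      have hx1 : (0:ℝ) ≤ x ^ (s-1) := Real.rpow_nonneg hx.le _
      rw [Real.norm_eq_abs, abs_of_nonneg (by positivity)]
      rw [mul_comm (Real.exp (-x))]
      apply mul_le_mul_of_nonneg_left _ hx1
      apply Real.exp_le_exp.2
      nlinarith
  have hFreal_val : ∀ k : ℕ, ∫ x in Set.Ioi (0:ℝ), x ^ (s - 1) * Real.exp (-((k+1 : ℝ) * x))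
      = (1 / (k+1 : ℝ)) ^ s * Real.Gamma s := by
    intro k
    exact Real.integral_rpow_mul_exp_neg_mul_Ioi hs (by positivity)
  have hF_int : ∀ k : ℕ, Integrable (F k) (volume.restrict (Set.Ioi 0)) := by
    intro k
    exact (((hFreal_int k).ofReal).mul_const (z ^ k))
  have hF_norm : ∀ k : ℕ, ∫ x in Set.Ioi (0:ℝ), ‖F k x‖
      = (1 / (k+1 : ℝ)) ^ s * Real.Gamma s * r ^ k := by
    intro k
    rw [← hFreal_val k, ← integral_mul_const]
    apply setIntegral_congr_fun measurableSet_Ioi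
    intro x hx
    rw [Set.mem_Ioi] at hx
    have hx1 : (0:ℝ) ≤ x ^ (s-1) := Real.rpow_nonneg hx.le _
    simp only [hF, norm_mul, Complex.norm_real, Real.norm_eq_abs, norm_pow]
    rw [abs_of_nonneg (by positivity), abs_of_pos (Real.exp_pos _)]
  have hF_sum : Summable fun k : ℕ => ∫ x in Set.Ioi (0:ℝ), ‖F k x‖ := by
    refine Summable.of_nonneg_of_le
      (fun k => integral_nonneg fun x => norm_nonneg _) (fun k => ?_)
      ((summable_geometric_of_lt_one hr0 hr1).mul_left (Real.Gamma s))
    rw [hF_norm k]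
    apply mul_le_mul_of_nonneg_right _ (pow_nonneg hr0 k)
    have h1 : (1 / (k+1 : ℝ)) ^ s ≤ 1 := by
      apply Real.rpow_le_one (by positivity) _ hs.le
      rw [div_le_one (by positivity)]
      linarith [Nat.cast_nonneg (α := ℝ) k]
    nlinarith [Real.Gamma_pos_of_pos hs]
  -- pointwise identity
  have hpt : ∀ x : ℝ, x ∈ Set.Ioi (0:ℝ) →
      ∑' k : ℕ, F k x = ((x ^ (s - 1) : ℝ) : ℂ) / ((Real.exp x : ℂ) - z) := by
    intro x hx
    rw [Set.mem_Ioi] at hx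
    have hw : ‖z * (Real.exp (-x) : ℂ)‖ < 1 := by
      rw [norm_mul, Complex.norm_real, Real.norm_eq_abs,
        abs_of_pos (Real.exp_pos _)]
      have hE : Real.exp (-x) ≤ 1 := by
        rw [← Real.exp_zero]; exact Real.exp_le_exp.mpr (by linarith)
      calc r * Real.exp (-x) ≤ r * 1 := mul_le_mul_of_nonneg_left hE hr0
        _ < 1 := by linarith
    have geo := tsum_geometric_of_norm_lt_one hw
    have key : ∀ k : ℕ, F k x
        = (((x ^ (s-1) : ℝ) : ℂ) * (Real.exp (-x) : ℂ)) * (z * (Real.exp (-x) : ℂ)) ^ k := by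
      intro k
      have hexpk : Real.exp (-((k+1 : ℝ) * x)) = Real.exp (-x) * Real.exp (-x) ^ k := by
        rw [← Real.exp_nat_mul, ← Real.exp_add]
        ring_nf
      simp only [hF, hexpk]
      push_cast
      rw [mul_pow]
      ring
    rw [tsum_congr key, tsum_mul_left, geo]
    have hne := hdenne x hx
    have hexp : (Real.exp (-x) : ℂ) * ((Real.exp x : ℂ) - z) = 1 - z * (Real.exp (-x) : ℂ) := by
      rw [mul_sub, ← Complex.ofReal_mul, ← Real.exp_add]
      simp [mul_comm]
    have h1w : (1 : ℂ) - z * (Real.exp (-x) : ℂ) ≠ 0 := by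
      intro h
      apply hne
      have h2 := hexp
      rw [h] at h2
      rcases mul_eq_zero.mp h2 with h' | h'
      · exact absurd h' (Complex.ofReal_ne_zero.mpr (Real.exp_ne_zero _))
      · exact h'
    rw [eq_div_iff hne]
    calc ((x ^ (s-1) : ℝ) : ℂ) * (Real.exp (-x) : ℂ) * (1 - z * (Real.exp (-x) : ℂ))⁻¹
          * ((Real.exp x : ℂ) - z)
        = ((x ^ (s-1) : ℝ) : ℂ) * ((Real.exp (-x) : ℂ) * ((Real.exp x : ℂ) - z))
          * (1 - z * (Real.exp (-x) : ℂ))⁻¹ := by ring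
      _ = ((x ^ (s-1) : ℝ) : ℂ) := by
          rw [hexp, mul_assoc, mul_inv_cancel₀ h1w, mul_one]
  -- swap sum and integral
  have hswap := integral_tsum_of_summable_integral_norm hF_int hF_sum
  have hcong : ∫ x in Set.Ioi (0:ℝ), ∑' k : ℕ, F k x
      = ∫ x in Set.Ioi (0:ℝ), ((x ^ (s - 1) : ℝ) : ℂ) / ((Real.exp x : ℂ) - z) :=
    setIntegral_congr_fun measurableSet_Ioi hpt
  have hFval : ∀ k : ℕ, ∫ x in Set.Ioi (0:ℝ), F k x
      = (((1 / (k+1 : ℝ)) ^ s * Real.Gamma s : ℝ) : ℂ) * z ^ k := by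
    intro k
    simp only [hF]
    rw [integral_mul_const]
    congr 1
    rw [← hFreal_val k]
    exact integral_ofReal
  rw [← hcong, ← hswap]
  rw [tsum_congr hFval, ← tsum_mul_left]
  have hG : (Real.Gamma s : ℂ) ≠ 0 :=
    Complex.ofReal_ne_zero.mpr (Real.Gamma_pos_of_pos hs).ne'
  apply tsum_congr
  intro k
  have hk1 : (0:ℝ) < (k+1 : ℝ) := by positivity
  have hks : ((((k : ℝ) + 1) ^ s : ℝ) : ℂ) ≠ 0 :=
    Complex.ofReal_ne_zero.mpr (Real.rpow_pos_of_pos hk1 s).ne'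
  have hcast : ((((k + 1 : ℕ) : ℝ) ^ s : ℝ) : ℂ) = ((((k : ℝ) + 1) ^ s : ℝ) : ℂ) := by
    push_cast; ring_nf
  rw [Complex.ofReal_mul, one_div, Real.inv_rpow hk1.le, Complex.ofReal_inv, hcast]
  field_simp
  ring
end

section
/- Let 0 < c₁ < c₂ < 1 and 0 < ε < 1/2 be constants. There exist a constant C > 0 and a positive integer N₀ such that for all integers N, L with N ≥ N₀ and c₁ ≤ N/L ≤ c₂, setting ρ = N/L, and for every purely imaginary complex number ξ with |ξ| ≤ N^{ε/4}, one has | N·Log(1 − √(1−ρ)·ξ·N^{−1/2}) + (L−N)·Log(1 + ρ(1−ρ)^{−1/2}·ξ·N^{−1/2}) + ξ²/2 − ((2ρ−1)/(3√(1−ρ)))·ξ³·N^{−1/2} | ≤ C·N^{ε−1}. -/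
lemma log_taylor_rem4 {z : ℂ} (hz : ‖z‖ ≤ 1/2) :
    ‖Complex.log (1+z) - (z - z^2/2 + z^3/3)‖ ≤ ‖z‖ ^ 4 := by
  have h1 : ‖z‖ < 1 := lt_of_le_of_lt hz (by norm_num)
  have h := Complex.norm_log_sub_logTaylor_le 3 h1
  have hT : Complex.logTaylor 4 z = z - z^2/2 + z^3/3 := by
    simp [Complex.logTaylor_succ, Complex.logTaylor_zero]
    ring
  rw [hT] at h
  norm_num at h
  have hpos : (0:ℝ) < 1 - ‖z‖ := by linarith
  have h2 : (1 - ‖z‖)⁻¹ ≤ 2 := by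
    rw [inv_le_comm₀ hpos (by norm_num)]
    linarith
  have h3 : (0:ℝ) ≤ ‖z‖ ^ 4 := by positivity
  refine h.trans ?_
  nlinarith

set_option maxHeartbeats 2000000 in
theorem log_expansion_on_critical_line (c₁ c₂ ε : ℝ)
    (hc₁ : 0 < c₁) (hc₁c₂ : c₁ < c₂) (hc₂ : c₂ < 1)
    (hε0 : 0 < ε) (hε : ε < 1 / 2) :
    ∃ C > (0 : ℝ), ∃ N₀ : ℕ, 0 < N₀ ∧
      ∀ N L : ℕ, N₀ ≤ N →
        c₁ ≤ (N : ℝ) / L → (N : ℝ) / L ≤ c₂ →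
        ∀ ξ : ℂ, ξ.re = 0 → ‖ξ‖ ≤ (N : ℝ) ^ (ε / 4) →
          ‖((N : ℂ) * Complex.log
                (1 - (Real.sqrt (1 - (N : ℝ) / L) : ℂ) * ξ *
                  (((N : ℝ) ^ (-(1 / 2) : ℝ) : ℝ) : ℂ))
              + ((L : ℂ) - (N : ℂ)) * Complex.log
                (1 + ((((N : ℝ) / L) / Real.sqrt (1 - (N : ℝ) / L) : ℝ) : ℂ) * ξ *
                  (((N : ℝ) ^ (-(1 / 2) : ℝ) : ℝ) : ℂ))
              + ξ ^ 2 / 2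
              - (((2 * ((N : ℝ) / L) - 1) / (3 * Real.sqrt (1 - (N : ℝ) / L)) : ℝ) : ℂ) *
                  ξ ^ 3 * (((N : ℝ) ^ (-(1 / 2) : ℝ) : ℝ) : ℂ))‖
            ≤ C * (N : ℝ) ^ (ε - 1) := by
  have hc₂0 : 0 < c₂ := hc₁.trans hc₁c₂
  have h1c₂ : 0 < 1 - c₂ := by linarith
  set B : ℝ := c₂ / Real.sqrt (1 - c₂) with hBdef
  have hsq : 0 < Real.sqrt (1 - c₂) := Real.sqrt_pos.mpr h1c₂
  have hB : 0 < B := div_pos hc₂0 hsq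
  set M : ℝ := 2 * (1 + B) with hMdef
  have hM2 : 2 ≤ M := by linarith [hMdef.ge]
  have hM0 : 0 < M := by linarith
  refine ⟨1 + B^4 / c₁, by positivity, ⌈M^4⌉₊ + 1, Nat.succ_pos _, ?_⟩
  intro N L hN hρ1 hρ2 ξ hre hξ
  have hNge : (M^4 : ℝ) ≤ (N:ℝ) := by
    have h1 : (M^4 : ℝ) ≤ (⌈M^4⌉₊ : ℝ) := Nat.le_ceil _
    have h2 : ((⌈M^4⌉₊ : ℕ) : ℝ) ≤ (N:ℝ) := by
      exact_mod_cast le_trans (Nat.le_succ _) hN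
    linarith
  have hNpos : (0:ℝ) < N := lt_of_lt_of_le (by positivity) hNge
  have hN1 : (1:ℝ) ≤ N := by
    have : 1 ≤ N := le_trans (Nat.succ_le_succ (Nat.zero_le _)) hN
    exact_mod_cast this
  have hL0 : L ≠ 0 := by rintro rfl; rw [Nat.cast_zero, div_zero] at hρ1; linarith
  have hLpos : (0:ℝ) < L := by exact_mod_cast Nat.pos_of_ne_zero hL0
  set ρ := (N:ℝ) / (L:ℝ) with hρdef
  have hρpos : 0 < ρ := lt_of_lt_of_le hc₁ hρ1
  have hρlt1 : ρ < 1 := lt_of_le_of_lt hρ2 hc₂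
  have h1ρ : 0 < 1 - ρ := by linarith
  set a := Real.sqrt (1 - ρ) with hadef
  have hapos : 0 < a := Real.sqrt_pos.mpr h1ρ
  have ha2 : a^2 = 1 - ρ := Real.sq_sqrt (le_of_lt h1ρ)
  have ha1 : a ≤ 1 := by
    rw [hadef]
    exact (Real.sqrt_le_sqrt (by linarith : 1-ρ ≤ 1)).trans (le_of_eq Real.sqrt_one)
  set b := ρ / a with hbdef
  set d := (2 * ρ - 1) / (3 * a) with hddef
  set t := (N:ℝ) ^ (-(1/2) : ℝ) with htdef
  -- basic facts about t, ρ, L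
  have htpos : 0 < t := Real.rpow_pos_of_pos hNpos _
  have ht2 : t^2 = ((N:ℝ))⁻¹ := by
    rw [htdef, ← Real.rpow_natCast ((N:ℝ) ^ (-(1/2):ℝ)) 2, ← Real.rpow_mul hNpos.le]
    norm_num
    exact Real.rpow_neg_one _
  have hNt2 : (N:ℝ) * t^2 = 1 := by
    rw [ht2]; field_simp
  have hρL : ρ * L = (N:ℝ) := by rw [hρdef]; field_simp
  have ha' : a ≠ 0 := ne_of_gt hapos
  have hab : a * b = ρ := by rw [hbdef]; field_simp
  have had : 3 * (a * d) = 2 * ρ - 1 := by rw [hddef]; field_simp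
  -- real algebraic identities
  have e1 : ((L:ℝ) - N) * (a*b) = N * a^2 := by
    rw [hab, ha2]; linear_combination hρL
  have e2 : (N:ℝ) * (a^2)^2 + ((L:ℝ) - N) * (a*b)^2 = N * a^2 := by
    rw [hab, ha2]; linear_combination ρ * hρL
  have e3 : -(N:ℝ) * (a^2)^3 + ((L:ℝ) - N) * (a*b)^3 = N * (3*(a*d)) * a^2 := by
    rw [hab, ha2, had]; linear_combination ρ^2 * hρL
  -- complex versions
  have E1c : ((L:ℂ) - N) * ((a:ℂ) * (b:ℂ)) = (N:ℂ) * (a:ℂ)^2 := by exact_mod_cast e1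
  have E2c : (N:ℂ) * ((a:ℂ)^2)^2 + ((L:ℂ) - N) * ((a:ℂ) * (b:ℂ))^2 = (N:ℂ) * (a:ℂ)^2 := by
    exact_mod_cast e2
  have E3c : -(N:ℂ) * ((a:ℂ)^2)^3 + ((L:ℂ) - N) * ((a:ℂ) * (b:ℂ))^3
      = (N:ℂ) * (3*((a:ℂ)*(d:ℂ))) * (a:ℂ)^2 := by exact_mod_cast e3
  have hNTc : (N:ℂ) * (t:ℂ)^2 = 1 := by exact_mod_cast hNt2
  -- rewrite log argument
  have harg1 : (1 : ℂ) - (a:ℂ) * ξ * (t:ℂ) = 1 + (-((a:ℂ) * ξ * (t:ℂ))) := by ring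
  rw [harg1]
  set z₁ : ℂ := -((a:ℂ) * ξ * (t:ℂ)) with hz₁def
  set z₂ : ℂ := ((b:ℝ):ℂ) * ξ * ((t:ℝ):ℂ) with hz₂def
  -- key identity
  have hkey : ((a:ℂ))^3 * ((N:ℂ) * (z₁ - z₁^2/2 + z₁^3/3)
      + ((L:ℂ) - N) * (z₂ - z₂^2/2 + z₂^3/3) + ξ^2/2 - (d:ℂ) * ξ^3 * (t:ℂ)) = 0 := by
    rw [hz₁def, hz₂def]
    linear_combination (ξ*(t:ℂ))*((a:ℂ))^2 * E1c - ((ξ*(t:ℂ))^2*(a:ℂ)/2) * E2c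
      + ((ξ*(t:ℂ))^3/3) * E3c
      + ((a:ℂ)^3*(d:ℂ)*ξ^3*(t:ℂ) - (a:ℂ)^3*ξ^2/2) * hNTc
  have hA0 : ((a:ℂ))^3 ≠ 0 := pow_ne_zero _ (Complex.ofReal_ne_zero.mpr ha')
  have hBIG : (N:ℂ) * (z₁ - z₁^2/2 + z₁^3/3)
      + ((L:ℂ) - N) * (z₂ - z₂^2/2 + z₂^3/3) + ξ^2/2 - (d:ℂ) * ξ^3 * (t:ℂ) = 0 :=
    (mul_eq_zero.mp hkey).resolve_left hA0
  -- remainders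
  set R₁ : ℂ := Complex.log (1+z₁) - (z₁ - z₁^2/2 + z₁^3/3) with hR₁def
  set R₂ : ℂ := Complex.log (1+z₂) - (z₂ - z₂^2/2 + z₂^3/3) with hR₂def
  have hexpr : (N:ℂ) * Complex.log (1 + z₁) + ((L:ℂ) - N) * Complex.log (1 + z₂)
      + ξ^2/2 - (d:ℂ) * ξ^3 * (t:ℂ) = (N:ℂ) * R₁ + ((L:ℂ) - N) * R₂ := by
    rw [hR₁def, hR₂def]; linear_combination hBIG
  rw [hexpr]
  -- size bounds
  set Q : ℝ := (N:ℝ)^(ε/4) * t with hQdef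
  have hQpos : 0 < Q := mul_pos (Real.rpow_pos_of_pos hNpos _) htpos
  have hξ0 : 0 ≤ ‖ξ‖ := norm_nonneg _
  have habs1 : ‖z₁‖ = a * ‖ξ‖ * t := by
    rw [hz₁def, norm_neg, norm_mul, norm_mul, Complex.norm_real, Complex.norm_real,
      Real.norm_eq_abs, Real.norm_eq_abs, abs_of_pos hapos, abs_of_pos htpos]
  have hbB : b ≤ B := by
    rw [hbdef, hBdef]
    apply div_le_div₀ hc₂0.le hρ2 hsq
    exact Real.sqrt_le_sqrt (by linarith)
  have hbpos : 0 < b := div_pos hρpos hapos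
  have habs2 : ‖z₂‖ = b * ‖ξ‖ * t := by
    rw [hz₂def, norm_mul, norm_mul, Complex.norm_real, Complex.norm_real,
      Real.norm_eq_abs, Real.norm_eq_abs, abs_of_pos hbpos, abs_of_pos htpos]
  have hZ1 : ‖z₁‖ ≤ Q := by
    rw [habs1, hQdef]
    calc a * ‖ξ‖ * t ≤ 1 * ((N:ℝ)^(ε/4)) * t := by
          apply mul_le_mul_of_nonneg_right _ htpos.le
          exact mul_le_mul ha1 hξ hξ0 (by norm_num)
      _ = (N:ℝ)^(ε/4) * t := by ring
  have hZ2 : ‖z₂‖ ≤ B * Q := by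
    rw [habs2, hQdef]
    calc b * ‖ξ‖ * t ≤ B * ((N:ℝ)^(ε/4)) * t := by
          apply mul_le_mul_of_nonneg_right _ htpos.le
          exact mul_le_mul hbB hξ hξ0 hB.le
      _ = B * ((N:ℝ)^(ε/4) * t) := by ring
  -- Q is small : Q ≤ 1/M
  have hQM : Q ≤ 1/M := by
    have h1 : Q = (N:ℝ)^(ε/4 + -(1/2)) := by
      rw [hQdef, htdef, Real.rpow_add hNpos]
    have h2 : (N:ℝ)^(ε/4 + -(1/2)) ≤ (N:ℝ)^(-(1/4) : ℝ) := by
      apply Real.rpow_le_rpow_of_exponent_le hN1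
      linarith
    have h3 : M ≤ (N:ℝ)^((1/4 : ℝ)) := by
      have := Real.rpow_le_rpow (by positivity) hNge (by norm_num : (0:ℝ) ≤ 1/4)
      calc M = (M^(4:ℕ))^((1/4 : ℝ)) := by
            rw [← Real.rpow_natCast M 4, ← Real.rpow_mul hM0.le]; norm_num
        _ ≤ (N:ℝ)^((1/4 : ℝ)) := this
    have h4 : (N:ℝ)^(-(1/4) : ℝ) ≤ 1/M := by
      rw [Real.rpow_neg hNpos.le]
      exact (inv_anti₀ hM0 h3).trans_eq (one_div M).symm
    linarith
  have hQhalf : Q ≤ 1/2 := by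
    have : (1:ℝ)/M ≤ 1/2 := by
      apply div_le_div_of_nonneg_left (by norm_num) (by norm_num) hM2
    linarith
  have hBQhalf : B * Q ≤ 1/2 := by
    have h1 : B * Q ≤ B * (1/M) := mul_le_mul_of_nonneg_left hQM hB.le
    have h2 : B * (1/M) ≤ 1/2 := by
      rw [mul_one_div, div_le_div_iff₀ hM0 (by norm_num : (0:ℝ) < 2)]
      linarith [hMdef.le, hMdef.ge]
    linarith
  -- remainder bounds
  have hR1 : ‖R₁‖ ≤ Q^4 := by
    refine (log_taylor_rem4 (hZ1.trans hQhalf)).trans ?_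
    exact pow_le_pow_left₀ (norm_nonneg _) hZ1 4
  have hR2 : ‖R₂‖ ≤ (B*Q)^4 := by
    refine (log_taylor_rem4 (hZ2.trans hBQhalf)).trans ?_
    exact pow_le_pow_left₀ (norm_nonneg _) hZ2 4
  -- prefactor norms
  have hNN : ‖(N:ℂ)‖ = (N:ℝ) := by
    rw [Complex.norm_natCast]
  have hNleL : (N:ℝ) ≤ (L:ℝ) := by
    have := (div_lt_one hLpos).mp hρlt1
    linarith
  have hLN : ‖(L:ℂ) - N‖ = (L:ℝ) - N := by
    have h : ((L:ℂ) - N) = (((L:ℝ) - N : ℝ):ℂ) := by push_cast; ring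
    rw [h, Complex.norm_real, Real.norm_eq_abs, abs_of_nonneg (by linarith)]
  have hLle : (L:ℝ) ≤ (N:ℝ)/c₁ := by
    rw [le_div_iff₀ hc₁]
    have := (le_div_iff₀ hLpos).mp hρ1
    linarith [this]
  -- final computation
  have hNQ4 : (N:ℝ) * Q^4 = (N:ℝ)^(ε-1) := by
    have h1 : ((N:ℝ)^(ε/4))^(4:ℕ) = (N:ℝ)^ε := by
      rw [← Real.rpow_natCast ((N:ℝ)^(ε/4)) 4, ← Real.rpow_mul hNpos.le]; norm_num
    have h2 : t^(4:ℕ) = ((N:ℝ)⁻¹)^2 := by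
      rw [show (4:ℕ) = 2*2 from rfl, pow_mul, ht2]
    have h3 : (N:ℝ) ^ (ε-1) = (N:ℝ)^ε / (N:ℝ) := by
      rw [Real.rpow_sub hNpos, Real.rpow_one]
    rw [hQdef, mul_pow, h1, h2, h3]
    have hN0' : (N:ℝ) ≠ 0 := ne_of_gt hNpos
    field_simp
  calc ‖(N:ℂ) * R₁ + ((L:ℂ) - N) * R₂‖
      ≤ ‖(N:ℂ) * R₁‖ + ‖((L:ℂ) - N) * R₂‖ := norm_add_le _ _
    _ = (N:ℝ) * ‖R₁‖ + ((L:ℝ) - N) * ‖R₂‖ := by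
        rw [norm_mul, norm_mul, hNN, hLN]
    _ ≤ (N:ℝ) * Q^4 + ((L:ℝ) - N) * (B*Q)^4 := by
        have g1 : (N:ℝ) * ‖R₁‖ ≤ (N:ℝ) * Q^4 :=
          mul_le_mul_of_nonneg_left hR1 hNpos.le
        have g2 : ((L:ℝ) - N) * ‖R₂‖ ≤ ((L:ℝ) - N) * (B*Q)^4 :=
          mul_le_mul_of_nonneg_left hR2 (by linarith)
        linarith
    _ ≤ (N:ℝ) * Q^4 + ((N:ℝ)/c₁) * (B*Q)^4 := by
        have hLN' : ((L:ℝ) - N) ≤ (N:ℝ)/c₁ := by linarith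
        have hpw : (0:ℝ) ≤ (B*Q)^4 := by positivity
        have := mul_le_mul_of_nonneg_right hLN' hpw
        linarith
    _ = (1 + B^4/c₁) * ((N:ℝ) * Q^4) := by field_simp
    _ = (1 + B^4/c₁) * (N:ℝ)^(ε-1) := by rw [hNQ4]
end

section
/- Let 0 < c₁ < c₂ < 1, 0 < ε < 1/2 and 0 < δ < 1 be constants. There exist a constant c > 0 and a positive integer N₀ such that for all integers N, L with N ≥ N₀ and c₁ ≤ N/L ≤ c₂ (set ρ = N/L and r₀ = ρ^ρ(1−ρ)^{1−ρ}), all complex numbers z with δ ≤ |z| ≤ 1 − δ, and all complex numbers w with Re w = −ρ and |w + ρ| ≥ ρ√(1−ρ)·N^{ε/4−1/2}, one has |w^N (w+1)^{L−N} − (−1)^N r₀^L z| ≥ r₀^L |z| e^{c N^{ε/2}}. -/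
set_option maxHeartbeats 1000000 in
theorem lower_bound_away_from_saddle (c₁ c₂ ε δ : ℝ)
    (hc₁ : 0 < c₁) (hc₁c₂ : c₁ < c₂) (hc₂ : c₂ < 1)
    (hε0 : 0 < ε) (hε : ε < 1 / 2) (hδ0 : 0 < δ) (hδ1 : δ < 1) :
    ∃ c > (0 : ℝ), ∃ N₀ : ℕ, 0 < N₀ ∧
      ∀ N L : ℕ, N₀ ≤ N →
        c₁ ≤ (N : ℝ) / L → (N : ℝ) / L ≤ c₂ →
        ∀ z : ℂ, δ ≤ ‖z‖ → ‖z‖ ≤ 1 - δ →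
          ∀ w : ℂ, w.re = -((N : ℝ) / L) →
            ((N : ℝ) / L) * Real.sqrt (1 - (N : ℝ) / L) * (N : ℝ) ^ (ε / 4 - 1 / 2)
                ≤ ‖w + (((N : ℝ) / L : ℝ) : ℂ)‖ →
            (((N : ℝ) / L) ^ ((N : ℝ) / L) * (1 - (N : ℝ) / L) ^ (1 - (N : ℝ) / L)) ^ L *
                ‖z‖ * Real.exp (c * (N : ℝ) ^ (ε / 2))
              ≤ ‖
                  (w ^ N * (w + 1) ^ (L - N)
                    - (-1 : ℂ) ^ N *
                      (((((N : ℝ) / L) ^ ((N : ℝ) / L) *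
                        (1 - (N : ℝ) / L) ^ (1 - (N : ℝ) / L)) ^ L : ℝ) : ℂ) * z)‖ := by
  have hlog2 : 0 < Real.log 2 := Real.log_pos one_lt_two
  set c₀ : ℝ := min (Real.log 2 / 2) ((1 - c₂) / 4) with hc₀def
  have hc₀ : 0 < c₀ := lt_min (by positivity) (by linarith)
  set a : ℝ := 2 * Real.log 2 / c₀ with hadef
  have ha : 0 < a := by positivity
  refine ⟨c₀ / 2, by positivity, ⌈a ^ (2 / ε)⌉₊ + 1, Nat.succ_pos _, ?_⟩
  intro N L hN h₁ h₂ z hz1 hz2 w hwre hwim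
  have hLne : L ≠ 0 := by
    rintro rfl
    simp only [Nat.cast_zero, div_zero] at h₁
    linarith
  have hLpos : (0 : ℝ) < L := by
    exact_mod_cast Nat.pos_of_ne_zero hLne
  set ρ : ℝ := (N : ℝ) / L with hρdef
  have hρ0 : 0 < ρ := lt_of_lt_of_le hc₁ h₁
  have hρ1 : ρ < 1 := lt_of_le_of_lt h₂ hc₂
  have h1ρ : 0 < 1 - ρ := by linarith
  have hNpos : 0 < N := Nat.lt_of_lt_of_le (Nat.succ_pos _) hN
  have hN0 : (0 : ℝ) < N := by exact_mod_cast hNpos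
  have hN1 : (1 : ℝ) ≤ N := by exact_mod_cast hNpos
  have hNL : N < L := by
    have : (N : ℝ) < L := by
      have := (div_lt_one hLpos).mp hρ1
      exact this
    exact_mod_cast this
  set m : ℕ := L - N with hmdef
  have hmcast : ((m : ℕ) : ℝ) = (L : ℝ) - N := by
    rw [hmdef, Nat.cast_sub hNL.le]
  have hρL : ρ * L = N := div_mul_cancel₀ _ (ne_of_gt hLpos)
  set r : ℝ := ρ ^ ρ * (1 - ρ) ^ (1 - ρ) with hrdef
  have hr0 : 0 < r := by positivity
  have hrL : r ^ L = ρ ^ N * (1 - ρ) ^ m := by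
    rw [hrdef, mul_pow, ← Real.rpow_natCast (ρ ^ ρ) L, ← Real.rpow_natCast ((1 - ρ) ^ (1 - ρ)) L,
      ← Real.rpow_mul hρ0.le, ← Real.rpow_mul h1ρ.le, hρL,
      show (1 - ρ) * (L : ℝ) = (m : ℝ) by rw [hmcast]; linear_combination -hρL,
      Real.rpow_natCast, Real.rpow_natCast]
  set t : ℝ := w.im with htdef
  set x : ℝ := (N : ℝ) ^ (ε / 2) with hxdef
  have hx0 : 0 < x := Real.rpow_pos_of_pos hN0 _
  -- x ≥ a
  have hxa : a ≤ x := by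
    have h1 : a ^ (2 / ε) ≤ (N : ℝ) := by
      calc a ^ (2 / ε) ≤ (⌈a ^ (2 / ε)⌉₊ : ℝ) := Nat.le_ceil _
        _ ≤ (N : ℝ) := by
            have : (⌈a ^ (2 / ε)⌉₊ : ℕ) ≤ N := le_trans (Nat.le_succ _) hN
            exact_mod_cast this
    have h2 : (a ^ (2 / ε)) ^ (ε / 2) ≤ (N : ℝ) ^ (ε / 2) :=
      Real.rpow_le_rpow (by positivity) h1 (by positivity)
    have h3 : (a ^ (2 / ε)) ^ (ε / 2) = a := by
      rw [← Real.rpow_mul ha.le, show 2 / ε * (ε / 2) = 1 by field_simp, Real.rpow_one]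
    rw [hxdef, ← h3]; exact h2
  -- abs squares
  have habs_w : ‖w‖ ^ 2 = ρ ^ 2 + t ^ 2 := by
    rw [Complex.sq_norm, Complex.normSq_apply, hwre]; ring
  have habs_w1 : ‖w + 1‖ ^ 2 = (1 - ρ) ^ 2 + t ^ 2 := by
    rw [Complex.sq_norm, Complex.normSq_apply]
    simp only [Complex.add_re, Complex.add_im, Complex.one_re, Complex.one_im, hwre]
    ring
  have habs_wρ : ‖w + (ρ : ℂ)‖ ^ 2 = t ^ 2 := by
    rw [Complex.sq_norm, Complex.normSq_apply]
    simp only [Complex.add_re, Complex.add_im, Complex.ofReal_re, Complex.ofReal_im, hwre]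
    ring
  -- lower bound on t^2
  have ht2 : ρ ^ 2 * (1 - ρ) * (N : ℝ) ^ (ε / 2 - 1) ≤ t ^ 2 := by
    have hsq : (ρ * Real.sqrt (1 - ρ) * (N : ℝ) ^ (ε / 4 - 1 / 2)) ^ 2
        ≤ ‖w + (ρ : ℂ)‖ ^ 2 := by
      apply pow_le_pow_left₀ (by positivity) hwim
    rw [habs_wρ] at hsq
    have hNsq : ((N : ℝ) ^ (ε / 4 - 1 / 2)) ^ 2 = (N : ℝ) ^ (ε / 2 - 1) := by
      rw [sq, ← Real.rpow_add hN0]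
      congr 1
      ring
    have hrw : (ρ * Real.sqrt (1 - ρ) * (N : ℝ) ^ (ε / 4 - 1 / 2)) ^ 2
        = ρ ^ 2 * (1 - ρ) * (N : ℝ) ^ (ε / 2 - 1) := by
      rw [mul_pow, mul_pow, Real.sq_sqrt h1ρ.le, hNsq]
    rw [hrw] at hsq
    exact hsq
  set u : ℝ := t ^ 2 / ρ ^ 2 with hudef
  have hu0 : 0 ≤ u := by positivity
  have hu : (1 - ρ) * (N : ℝ) ^ (ε / 2 - 1) ≤ u := by
    rw [hudef, le_div_iff₀ (by positivity)]
    calc (1 - ρ) * (N : ℝ) ^ (ε / 2 - 1) * ρ ^ 2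
        = ρ ^ 2 * (1 - ρ) * (N : ℝ) ^ (ε / 2 - 1) := by ring
      _ ≤ t ^ 2 := ht2
  have hρ2u : ρ ^ 2 + t ^ 2 = ρ ^ 2 * (1 + u) := by
    rw [hudef]; field_simp
  have hNx : (N : ℝ) * (N : ℝ) ^ (ε / 2 - 1) = x := by
    rw [hxdef, Real.rpow_sub hN0, Real.rpow_one]
    field_simp
  -- key: exp (2 c₀ x) ≤ (1+u)^N
  have hkey : Real.exp (2 * c₀ * x) ≤ (1 + u) ^ N := by
    rcases le_or_gt 1 u with h1 | h1
    · have hxN : x ≤ (N : ℝ) := by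
        rw [hxdef]
        calc (N : ℝ) ^ (ε / 2) ≤ (N : ℝ) ^ (1 : ℝ) :=
            Real.rpow_le_rpow_of_exponent_le hN1 (by linarith)
          _ = (N : ℝ) := Real.rpow_one _
      have h2c : 2 * c₀ ≤ Real.log 2 := by
        have := min_le_left (Real.log 2 / 2) ((1 - c₂) / 4)
        rw [← hc₀def] at this; linarith
      calc Real.exp (2 * c₀ * x) ≤ Real.exp ((N : ℝ) * Real.log 2) := by
            apply Real.exp_le_exp.mpr
            have e1 : 2 * c₀ * x ≤ Real.log 2 * x :=
              mul_le_mul_of_nonneg_right h2c hx0.le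
            have e2 : Real.log 2 * x ≤ Real.log 2 * (N : ℝ) :=
              mul_le_mul_of_nonneg_left hxN hlog2.le
            linarith
        _ = (2 : ℝ) ^ N := by
            rw [Real.exp_nat_mul, Real.exp_log two_pos]
        _ ≤ (1 + u) ^ N := pow_le_pow_left₀ (by norm_num) (by linarith) N
    · have hexpu : Real.exp (u / 2) ≤ 1 + u := by
        have hpos : 0 < 1 - u / 2 := by linarith
        have h3 : 1 - u / 2 ≤ Real.exp (-(u / 2)) := by
          have := Real.add_one_le_exp (-(u / 2)); linarith
        have h4 : Real.exp (u / 2) ≤ (1 - u / 2)⁻¹ := by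
          rw [show Real.exp (u / 2) = (Real.exp (-(u / 2)))⁻¹ by rw [Real.exp_neg, inv_inv]]
          exact inv_anti₀ hpos h3
        have h5 : (1 - u / 2)⁻¹ ≤ 1 + u := by
          have h6 : 1 ≤ (1 + u) * (1 - u / 2) := by
            linarith [mul_nonneg hu0 (by linarith : (0 : ℝ) ≤ 1 - u)]
          calc (1 - u / 2)⁻¹ = 1 * (1 - u / 2)⁻¹ := (one_mul _).symm
            _ ≤ ((1 + u) * (1 - u / 2)) * (1 - u / 2)⁻¹ :=
                mul_le_mul_of_nonneg_right h6 (by positivity)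
            _ = 1 + u := mul_inv_cancel_right₀ (ne_of_gt hpos) _
        linarith
      have hN_u : (1 - c₂) * x ≤ (N : ℝ) * u := by
        have h6 : (N : ℝ) * ((1 - ρ) * (N : ℝ) ^ (ε / 2 - 1)) ≤ (N : ℝ) * u :=
          mul_le_mul_of_nonneg_left hu hN0.le
        have h7 : (N : ℝ) * ((1 - ρ) * (N : ℝ) ^ (ε / 2 - 1)) = (1 - ρ) * x := by
          rw [← hNx]; ring
        have h8 : (1 - c₂) * x ≤ (1 - ρ) * x := by
          apply mul_le_mul_of_nonneg_right _ hx0.le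
          linarith
        linarith
      have h2c : 2 * c₀ ≤ (1 - c₂) / 2 := by
        have := min_le_right (Real.log 2 / 2) ((1 - c₂) / 4)
        rw [← hc₀def] at this; linarith
      calc Real.exp (2 * c₀ * x) ≤ Real.exp ((N : ℝ) * (u / 2)) := by
            apply Real.exp_le_exp.mpr
            have e1 : 2 * c₀ * x ≤ (1 - c₂) / 2 * x :=
              mul_le_mul_of_nonneg_right h2c hx0.le
            linarith
        _ = Real.exp (u / 2) ^ N := by rw [← Real.exp_nat_mul]
        _ ≤ (1 + u) ^ N := pow_le_pow_left₀ (Real.exp_nonneg _) hexpu N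
  -- A := |w|^N * |w+1|^m ; show r^L * exp(c₀ x) ≤ A
  set A : ℝ := ‖w‖ ^ N * ‖w + 1‖ ^ m with hAdef
  have hA0 : 0 ≤ A := by positivity
  have hR0 : 0 < r ^ L * Real.exp (c₀ * x) := by positivity
  have hA2 : A ^ 2 = (ρ ^ 2 + t ^ 2) ^ N * ((1 - ρ) ^ 2 + t ^ 2) ^ m := by
    rw [hAdef, mul_pow, pow_right_comm _ N 2, pow_right_comm _ m 2, habs_w, habs_w1]
  have hR2 : (r ^ L * Real.exp (c₀ * x)) ^ 2
      = (ρ ^ 2) ^ N * ((1 - ρ) ^ 2) ^ m * Real.exp (2 * c₀ * x) := by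
    have hexp2 : Real.exp (c₀ * x) ^ 2 = Real.exp (2 * c₀ * x) := by
      rw [sq, ← Real.exp_add]; ring_nf
    rw [hrL, mul_pow, hexp2, mul_pow, pow_right_comm ρ N 2, pow_right_comm (1 - ρ) m 2]
  have h2 : ((1 - ρ) ^ 2) ^ m ≤ ((1 - ρ) ^ 2 + t ^ 2) ^ m :=
    pow_le_pow_left₀ (sq_nonneg _) (by linarith [sq_nonneg t]) m
  have hmul : Real.exp (2 * c₀ * x) * ((1 - ρ) ^ 2) ^ m
      ≤ (1 + u) ^ N * ((1 - ρ) ^ 2 + t ^ 2) ^ m :=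
    mul_le_mul hkey h2 (pow_nonneg (sq_nonneg _) m) (pow_nonneg (by positivity) N)
  have hsq : (r ^ L * Real.exp (c₀ * x)) ^ 2 ≤ A ^ 2 := by
    rw [hA2, hR2, hρ2u, mul_pow]
    calc (ρ ^ 2) ^ N * ((1 - ρ) ^ 2) ^ m * Real.exp (2 * c₀ * x)
        = (ρ ^ 2) ^ N * (Real.exp (2 * c₀ * x) * ((1 - ρ) ^ 2) ^ m) := by ring
      _ ≤ (ρ ^ 2) ^ N * ((1 + u) ^ N * ((1 - ρ) ^ 2 + t ^ 2) ^ m) :=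
          mul_le_mul_of_nonneg_left hmul (by positivity)
      _ = (ρ ^ 2) ^ N * (1 + u) ^ N * ((1 - ρ) ^ 2 + t ^ 2) ^ m := by ring
  have hA : r ^ L * Real.exp (c₀ * x) ≤ A := by
    have h := Real.sqrt_le_sqrt hsq
    rwa [Real.sqrt_sq hR0.le, Real.sqrt_sq hA0] at h
  -- exponential inequality
  have hs2 : (2 : ℝ) ≤ Real.exp (c₀ * x / 2) := by
    have : Real.log 2 ≤ c₀ * x / 2 := by
      have := mul_le_mul_of_nonneg_left hxa hc₀.le
      rw [hadef] at this
      have heq : c₀ * (2 * Real.log 2 / c₀) = 2 * Real.log 2 := by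
        field_simp
      rw [heq] at this
      linarith
    calc (2 : ℝ) = Real.exp (Real.log 2) := (Real.exp_log two_pos).symm
      _ ≤ Real.exp (c₀ * x / 2) := Real.exp_le_exp.mpr this
  have hE1 : (1 - δ) * Real.exp (c₀ / 2 * x) + (1 - δ) ≤ Real.exp (c₀ * x) := by
    have hsplit : Real.exp (c₀ * x) = Real.exp (c₀ * x / 2) * Real.exp (c₀ * x / 2) := by
      rw [← Real.exp_add]; ring_nf
    have heq2 : c₀ / 2 * x = c₀ * x / 2 := by ring
    rw [heq2, hsplit]
    set s : ℝ := Real.exp (c₀ * x / 2) with hsdef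
    have hss : s + 1 ≤ s * s := by
      have := mul_le_mul_of_nonneg_right hs2 (by linarith : (0 : ℝ) ≤ s)
      linarith
    have h7 : (1 - δ) * (s + 1) ≤ 1 * (s + 1) := by
      apply mul_le_mul_of_nonneg_right (by linarith) (by linarith)
    linarith [h7, hss]
  -- triangle inequality
  have habsE : ‖(-1 : ℂ) ^ N * ((r ^ L : ℝ) : ℂ) * z‖ = r ^ L * ‖z‖ := by
    rw [norm_mul, norm_mul, norm_pow]
    simp [Complex.norm_real, abs_of_nonneg hr0.le, abs_of_nonneg (pow_nonneg hr0.le L)]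
  have hprod : ‖w ^ N * (w + 1) ^ (L - N)‖ = A := by
    rw [norm_mul, norm_pow, norm_pow, hAdef]
  have htri : A - r ^ L * ‖z‖
      ≤ ‖w ^ N * (w + 1) ^ (L - N)
          - (-1 : ℂ) ^ N * ((r ^ L : ℝ) : ℂ) * z‖ := by
    have h := norm_sub_norm_le (w ^ N * (w + 1) ^ (L - N))
      ((-1 : ℂ) ^ N * ((r ^ L : ℝ) : ℂ) * z)
    rw [hprod, habsE] at h
    exact h
  -- assemble
  have hzd : ‖z‖ ≤ 1 - δ := hz2
  calc r ^ L * ‖z‖ * Real.exp (c₀ / 2 * x)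
      ≤ r ^ L * (1 - δ) * Real.exp (c₀ / 2 * x) := by
        apply mul_le_mul_of_nonneg_right _ (Real.exp_nonneg _)
        exact mul_le_mul_of_nonneg_left hzd (by positivity)
    _ ≤ r ^ L * Real.exp (c₀ * x) - r ^ L * (1 - δ) := by
        have h8 := mul_le_mul_of_nonneg_left hE1 (pow_nonneg hr0.le L)
        linarith [h8]
    _ ≤ A - r ^ L * ‖z‖ := by
        have : r ^ L * ‖z‖ ≤ r ^ L * (1 - δ) :=
          mul_le_mul_of_nonneg_left hzd (by positivity)
        linarith
    _ ≤ _ := htri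
end
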